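/- arXiv:2203.08661 — 4 statements merged into one kernel-verified Lean document; each statement's English description precedes it below -/
import Mathlib

section
/- Let {τ_k}_{k=N}^M be a geometrically increasing sequence. Then for every q ∈ (0,∞] and every nonnegative sequence {a_k}_{k=N}^M, the ℓ^q norm of {τ_k · sup_{k ≤ m ≤ M} a_m} is equivalent (with constants depending only on α and q) to the ℓ^q norm of {τ_k a_k}. -/
open MeasureTheory Set ENNReal

noncomputable section

/-- The `ℓ^q` norm of a sequence indexed by a subset `S` of the integers. -/
def lqNorm (q : ℝ≥0∞) (S : Set ℤ) (a : ℤ → ℝ≥0∞) : ℝ≥0∞ :=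
  if q = ∞ then ⨆ k ∈ S, a k
  else (∑' k : S, a (k : ℤ) ^ q.toReal) ^ (1 / q.toReal)

/-- Indices `k ∈ ℤ` with `N ≤ k ≤ M`, where `N, M ∈ ℤ ∪ {−∞, +∞}` (as extended reals). -/
def idxSet (N M : EReal) : Set ℤ := {k : ℤ | N ≤ ((k : ℝ) : EReal) ∧ ((k : ℝ) : EReal) ≤ M}

lemma idx_between {N M : EReal} {k m j : ℤ} (hk : k ∈ idxSet N M) (hm : m ∈ idxSet N M)
    (h1 : k ≤ j) (h2 : j ≤ m) : j ∈ idxSet N M := by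
  refine ⟨le_trans hk.1 ?_, le_trans ?_ hm.2⟩ <;>
    · rw [EReal.coe_le_coe_iff]; exact_mod_cast ‹_›

lemma tau_growth {N M : EReal} {τ : ℤ → ℝ≥0∞} {A : ℝ≥0∞}
    (hτ : ∀ k : ℤ, k ∈ idxSet N M → (k - 1) ∈ idxSet N M → A * τ (k - 1) ≤ τ k) :
    ∀ n : ℕ, ∀ k : ℤ, k ∈ idxSet N M → (k + n) ∈ idxSet N M →
      A ^ n * τ k ≤ τ (k + n) := by
  intro n
  induction n with
  | zero => intro k hk _; simpa using le_rfl
  | succ n ih =>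
    intro k hk hkn
    have hkn' : (k + n + 1) ∈ idxSet N M := by
      have : (k : ℤ) + ((n : ℕ) + 1 : ℕ) = k + n + 1 := by push_cast; ring
      rwa [this] at hkn
    have hmid : (k + n) ∈ idxSet N M := idx_between hk hkn' (by omega) (by omega)
    have h1 : A ^ n * τ k ≤ τ (k + n) := ih k hk hmid
    have h2 : A * τ (k + n) ≤ τ (k + n + 1) := by
      have := hτ (k + n + 1) hkn' (by simpa using hmid)
      simpa using this
    have : (k : ℤ) + ((n : ℕ) + 1 : ℕ) = k + n + 1 := by push_cast; ring
    rw [this]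
    calc A ^ (n + 1) * τ k = A * (A ^ n * τ k) := by ring
    _ ≤ A * τ (k + n) := by exact mul_le_mul_right h1 A
    _ ≤ τ (k + n + 1) := h2

lemma lqNorm_mono (q : ℝ≥0∞) (S : Set ℤ) {a b : ℤ → ℝ≥0∞} (h : ∀ k ∈ S, a k ≤ b k) :
    lqNorm q S a ≤ lqNorm q S b := by
  unfold lqNorm
  split
  · exact iSup_mono fun k => iSup_mono' fun hk => ⟨hk, h k hk⟩
  · refine ENNReal.rpow_le_rpow (ENNReal.tsum_le_tsum fun k => ?_) (by positivity)
    exact ENNReal.rpow_le_rpow (h k k.2) ENNReal.toReal_nonneg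

lemma pow_rpow_comm (x : ℝ≥0∞) (n : ℕ) (t : ℝ) : (x ^ n) ^ t = (x ^ t) ^ n := by
  rw [← ENNReal.rpow_natCast x n, ← ENNReal.rpow_natCast (x ^ t) n,
    ← ENNReal.rpow_mul, ← ENNReal.rpow_mul, mul_comm]

/-- For a geometrically increasing sequence `{τ_k}_{k=N}^M` (with ratio `α > 1`), the `ℓ^q`
norm of `{τ_k · sup_{k ≤ m ≤ M} a_m}` is equivalent to the `ℓ^q` norm of `{τ_k a_k}`, with
constants depending only on `α` and `q`. -/
theorem stmt2 (q : ℝ≥0∞) (hq : 0 < q) (α : ℝ) (hα : 1 < α) :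
    ∃ c C : ℝ≥0∞, 0 < c ∧ C < ∞ ∧
      ∀ N M : EReal, N ≤ M → ∀ τ : ℤ → ℝ≥0∞,
        (∀ k ∈ idxSet N M, 0 < τ k ∧ τ k < ∞) →
        (∀ k : ℤ, k ∈ idxSet N M → (k - 1) ∈ idxSet N M →
          ENNReal.ofReal α * τ (k - 1) ≤ τ k) →
        ∀ a : ℤ → ℝ≥0∞,
          c * lqNorm q (idxSet N M) (fun k => τ k * a k) ≤
              lqNorm q (idxSet N M)
                (fun k => τ k * ⨆ m ∈ {m : ℤ | m ∈ idxSet N M ∧ k ≤ m}, a m) ∧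
            lqNorm q (idxSet N M)
                (fun k => τ k * ⨆ m ∈ {m : ℤ | m ∈ idxSet N M ∧ k ≤ m}, a m) ≤
              C * lqNorm q (idxSet N M) (fun k => τ k * a k) := by
  set A : ℝ≥0∞ := ENNReal.ofReal α with hA
  have hA1 : 1 < A := by
    rw [hA, ← ENNReal.ofReal_one]
    exact (ENNReal.ofReal_lt_ofReal_iff (by linarith)).mpr hα
  have hA0 : A ≠ 0 := by positivity
  have hAtop : A ≠ ∞ := ENNReal.ofReal_ne_top
  set t : ℝ := q.toReal with ht'
  set β : ℝ≥0∞ := A⁻¹ ^ t with hβ'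
  refine ⟨1, if q = ∞ then 1 else ((1 - β)⁻¹) ^ (1 / t), one_pos, ?_, ?_⟩
  · split
    · exact one_lt_top
    · have hqtop : q ≠ ∞ := ‹¬ q = ∞›
      have ht : 0 < t := ENNReal.toReal_pos hq.ne' hqtop
      have hβ1 : β < 1 := by
        rw [hβ']
        exact ENNReal.rpow_lt_one (ENNReal.inv_lt_one.mpr hA1) ht
      have : (1 - β) ≠ 0 := (tsub_pos_of_lt hβ1).ne'
      exact ENNReal.rpow_lt_top_of_nonneg (by positivity) (by simpa using this)
  intro N M hNM τ hτfin hτ a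
  set S := idxSet N M with hS
  have growth := tau_growth (A := A) hτ
  constructor
  · rw [one_mul]
    refine lqNorm_mono q S fun k hk => ?_
    exact mul_le_mul_right (le_iSup₂ (f := fun m (_ : m ∈ {m : ℤ | m ∈ S ∧ k ≤ m}) => a m)
      k ⟨hk, le_refl k⟩) _
  · -- upper bound
    by_cases hqtop : q = ∞
    · simp only [hqtop, if_pos]
      rw [lqNorm, if_pos rfl, lqNorm, if_pos rfl, one_mul]
      refine iSup₂_le fun k hk => ?_
      rw [ENNReal.mul_iSup]
      refine iSup_le fun m => ?_
      rw [ENNReal.mul_iSup]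
      refine iSup_le fun hm => ?_
      have hkm : k ≤ m := hm.2
      have hn : (k + ((m - k).toNat : ℕ) : ℤ) = m := by
        have := Int.toNat_of_nonneg (by omega : (0:ℤ) ≤ m - k)
        omega
      have hτk : τ k ≤ τ m := by
        have h1 := growth (m - k).toNat k hk (by rw [hn]; exact hm.1)
        rw [hn] at h1
        calc τ k = 1 * τ k := (one_mul _).symm
        _ ≤ A ^ (m - k).toNat * τ k := mul_le_mul_left (one_le_pow_of_one_le' hA1.le _) _
        _ ≤ τ m := h1
      exact le_trans (mul_le_mul_left hτk (a m))
        (le_iSup₂ (f := fun j (_ : j ∈ S) => τ j * a j) m hm.1)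
    · have ht : 0 < t := ENNReal.toReal_pos hq.ne' hqtop
      have hβ1 : β < 1 := ENNReal.rpow_lt_one (ENNReal.inv_lt_one.mpr hA1) ht
      simp only [if_neg hqtop]
      rw [lqNorm, if_neg hqtop, lqNorm, if_neg hqtop]
      -- g is the indicator extension of τ * a
      set g : ℤ → ℝ≥0∞ := S.indicator (fun m => τ m * a m) with hg
      have key : ∀ k ∈ S,
          (τ k * ⨆ m ∈ {m : ℤ | m ∈ S ∧ k ≤ m}, a m) ^ t
            ≤ ∑' n : ℕ, β ^ n * g (k + n) ^ t := by
        intro k hk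
        have hle : (τ k * ⨆ m ∈ {m : ℤ | m ∈ S ∧ k ≤ m}, a m)
            ≤ (∑' n : ℕ, β ^ n * g (k + n) ^ t) ^ (1 / t) := by
          rw [ENNReal.mul_iSup]
          refine iSup_le fun m => ?_
          rw [ENNReal.mul_iSup]
          refine iSup_le fun hm => ?_
          set n : ℕ := (m - k).toNat with hn'
          have hkm : k ≤ m := hm.2
          have hn : (k + (n : ℕ) : ℤ) = m := by
            have := Int.toNat_of_nonneg (by omega : (0:ℤ) ≤ m - k)
            omega
          have h1 : A ^ n * τ k ≤ τ m := by
            have := growth n k hk (by rw [hn]; exact hm.1)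
            rwa [hn] at this
          have hτk : τ k ≤ A⁻¹ ^ n * τ m := by
            calc τ k = A⁻¹ ^ n * (A ^ n * τ k) := by
                  rw [← mul_assoc, ← mul_pow, ENNReal.inv_mul_cancel hA0 hAtop, one_pow, one_mul]
            _ ≤ A⁻¹ ^ n * τ m := mul_le_mul_right h1 _
          have hterm : τ k * a m ≤ A⁻¹ ^ n * g (k + n) := by
            rw [hn, hg, Set.indicator_of_mem hm.1]
            calc τ k * a m ≤ (A⁻¹ ^ n * τ m) * a m := mul_le_mul_left hτk _
            _ = A⁻¹ ^ n * (τ m * a m) := by ring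
          refine hterm.trans ?_
          have heq : A⁻¹ ^ n * g (k + n) = (β ^ n * g (k + n) ^ t) ^ (1 / t) := by
            rw [hβ', ← pow_rpow_comm, ← ENNReal.mul_rpow_of_nonneg _ _ ht.le,
              ← ENNReal.rpow_mul, mul_one_div_cancel ht.ne', ENNReal.rpow_one]
          rw [heq]
          exact ENNReal.rpow_le_rpow (ENNReal.le_tsum n) (by positivity)
        calc (τ k * ⨆ m ∈ {m : ℤ | m ∈ S ∧ k ≤ m}, a m) ^ t
            ≤ ((∑' n : ℕ, β ^ n * g (k + n) ^ t) ^ (1 / t)) ^ t :=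
              ENNReal.rpow_le_rpow hle ht.le
        _ = ∑' n : ℕ, β ^ n * g (k + n) ^ t := by
              rw [← ENNReal.rpow_mul, one_div_mul_cancel ht.ne', ENNReal.rpow_one]
      have hsum : ∑' k : S, (τ (k : ℤ) * ⨆ m ∈ {m : ℤ | m ∈ S ∧ (k:ℤ) ≤ m}, a m) ^ t
          ≤ (1 - β)⁻¹ * ∑' k : S, (τ (k : ℤ) * a (k : ℤ)) ^ t := by
        calc ∑' k : S, (τ (k : ℤ) * ⨆ m ∈ {m : ℤ | m ∈ S ∧ (k:ℤ) ≤ m}, a m) ^ t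
            ≤ ∑' k : S, ∑' n : ℕ, β ^ n * g ((k : ℤ) + n) ^ t :=
              ENNReal.tsum_le_tsum fun k => key k k.2
        _ ≤ ∑' k : ℤ, ∑' n : ℕ, β ^ n * g (k + n) ^ t := by
              rw [tsum_subtype S (fun k : ℤ => ∑' n : ℕ, β ^ n * g (k + n) ^ t)]
              exact ENNReal.tsum_le_tsum fun k => Set.indicator_le_self _ _ k
        _ = ∑' n : ℕ, ∑' k : ℤ, β ^ n * g (k + n) ^ t := ENNReal.tsum_comm
        _ = ∑' n : ℕ, β ^ n * ∑' k : ℤ, g (k + n) ^ t := by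
              congr 1; funext n; exact ENNReal.tsum_mul_left
        _ = ∑' n : ℕ, β ^ n * ∑' k : ℤ, g k ^ t := by
              congr 1; funext n; congr 1
              exact (Equiv.addRight (n : ℤ)).tsum_eq (fun k => g k ^ t)
        _ = (∑' n : ℕ, β ^ n) * ∑' k : ℤ, g k ^ t := ENNReal.tsum_mul_right
        _ = (1 - β)⁻¹ * ∑' k : ℤ, g k ^ t := by rw [ENNReal.tsum_geometric]
        _ = (1 - β)⁻¹ * ∑' k : S, (τ (k : ℤ) * a (k : ℤ)) ^ t := by
              congr 1
              rw [tsum_subtype S (fun k : ℤ => (τ k * a k) ^ t)]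
              congr 1; funext k
              by_cases hk : k ∈ S
              · simp [hg, Set.indicator_of_mem hk]
              · simp [hg, Set.indicator_of_notMem hk, ENNReal.zero_rpow_of_pos ht]
      calc (∑' k : S, (τ (k : ℤ) * ⨆ m ∈ {m : ℤ | m ∈ S ∧ (k:ℤ) ≤ m}, a m) ^ t) ^ (1 / t)
          ≤ ((1 - β)⁻¹ * ∑' k : S, (τ (k : ℤ) * a (k : ℤ)) ^ t) ^ (1 / t) :=
            ENNReal.rpow_le_rpow hsum (by positivity)
      _ = (1 - β)⁻¹ ^ (1 / t) * (∑' k : S, (τ (k : ℤ) * a (k : ℤ)) ^ t) ^ (1 / t) :=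
            ENNReal.mul_rpow_of_nonneg _ _ (by positivity)
end
end

section
/- Suppose 0 < p, r < ∞ and the weighted discrete embedding ℓ^p({v_k}) ↪ ℓ^r({w_k}) holds with norm C, i.e., (∑_k |a_k w_k|^r)^{1/r} ≤ C (∑_k |a_k v_k|^p)^{1/p} for all sequences {a_k}. Then ‖{w_k / v_k}‖_{ℓ^ρ} ≤ C, where 1/ρ = (1/r − 1/p)_+ (with ℓ^∞ meaning the supremum when r ≥ p). -/
open MeasureTheory Set ENNReal

noncomputable section

/-- Testing against a single-point sequence recovers the value at that point. -/
lemma lqNorm_single (q : ℝ≥0∞) (hq0 : q ≠ 0) (hq : q ≠ ∞) (S : Set ℤ) (u : ℤ → ℝ≥0∞)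
    (k₀ : ℤ) (hk₀ : k₀ ∈ S) :
    lqNorm q S (fun k => (if k = k₀ then 1 else 0) * u k) = u k₀ := by
  have hR : 0 < q.toReal := ENNReal.toReal_pos hq0 hq
  rw [lqNorm, if_neg hq]
  have h1 : ∑' k : S, ((if (k : ℤ) = k₀ then (1 : ℝ≥0∞) else 0) * u k) ^ q.toReal
      = u k₀ ^ q.toReal := by
    rw [tsum_eq_single (⟨k₀, hk₀⟩ : S)]
    · simp
    · intro j hj
      rw [if_neg, zero_mul, ENNReal.zero_rpow_of_pos hR]
      intro h; exact hj (Subtype.ext h)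
  rw [h1, ← ENNReal.rpow_mul, mul_one_div_cancel hR.ne', ENNReal.rpow_one]

/-- Landau-type resonance theorem: if the weighted discrete embedding
`ℓ^p({v_k}) ↪ ℓ^r({w_k})` holds with norm `C` (`0 < p, r < ∞`), then
`‖{w_k / v_k}‖_{ℓ^ρ} ≤ C` where `1/ρ = (1/r − 1/p)_+` (in `ℝ≥0∞`, so `ρ = ∞`,
i.e. a supremum, when `r ≥ p`). -/
theorem stmt3 (S : Set ℤ) (hS : S.Nonempty) (v w : ℤ → ℝ≥0∞)
    (p r ρ : ℝ≥0∞) (hp0 : 0 < p) (hp : p < ∞) (hr0 : 0 < r) (hr : r < ∞)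
    (hρ : 1 / ρ = 1 / r - 1 / p) (C : ℝ≥0∞)
    (hemb : ∀ a : ℤ → ℝ≥0∞,
      lqNorm r S (fun k => a k * w k) ≤ C * lqNorm p S (fun k => a k * v k)) :
    lqNorm ρ S (fun k => w k / v k) ≤ C := by
  classical
  -- pointwise bound from single-point test sequences
  have key : ∀ k ∈ S, w k ≤ C * v k := by
    intro k₀ hk₀
    have h := hemb (fun k => if k = k₀ then 1 else 0)
    rwa [lqNorm_single r hr0.ne' hr.ne S w k₀ hk₀,
      lqNorm_single p hp0.ne' hp.ne S v k₀ hk₀] at h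
  by_cases hrhoT : ρ = ∞
  · rw [lqNorm, if_pos hrhoT]
    exact iSup₂_le fun k hk => ENNReal.div_le_of_le_mul (key k hk)
  by_cases hC : C = ∞
  · exact hC ▸ le_top
  -- now r < p necessarily
  have hρne : (1 : ℝ≥0∞) / ρ ≠ 0 := by
    rw [one_div, Ne, ENNReal.inv_eq_zero]; exact hrhoT
  have hrp : r < p := by
    have h1 : 1 / p < 1 / r := by
      have := hρ ▸ hρne
      have hlt := tsub_pos_iff_lt.mp (pos_iff_ne_zero.mpr this)
      exact hlt
    rw [one_div, one_div] at h1
    exact ENNReal.inv_lt_inv.mp h1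
  have hρ0 : ρ ≠ 0 := by
    intro h
    rw [h, one_div, ENNReal.inv_zero] at hρ
    have : (1 : ℝ≥0∞) / r - 1 / p ≤ 1 / r := tsub_le_self
    rw [← hρ] at this
    have hrtop : (1 : ℝ≥0∞) / r ≠ ∞ := by
      rw [one_div, Ne, ENNReal.inv_eq_top]; exact hr0.ne'
    exact hrtop (top_le_iff.mp this)
  set P := p.toReal with hPdef
  set R := r.toReal with hRdef
  set Q := ρ.toReal with hQdef
  have hP : 0 < P := ENNReal.toReal_pos hp0.ne' hp.ne
  have hR : 0 < R := ENNReal.toReal_pos hr0.ne' hr.ne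
  have hQ : 0 < Q := ENNReal.toReal_pos hρ0 hrhoT
  have hinv : 1 / R = 1 / P + 1 / Q := by
    have h1 : (1 / ρ).toReal = (1 / r - 1 / p).toReal := by rw [hρ]
    have hle : (1 : ℝ≥0∞) / p ≤ 1 / r := by
      rw [one_div, one_div]; exact ENNReal.inv_le_inv.mpr hrp.le
    have hrtop : (1 : ℝ≥0∞) / r ≠ ∞ := by
      rw [one_div, Ne, ENNReal.inv_eq_top]; exact hr0.ne'
    rw [ENNReal.toReal_sub_of_le hle hrtop] at h1
    simp only [one_div, ENNReal.toReal_inv] at h1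
    rw [one_div, one_div, one_div]
    linarith [h1]
  -- main estimate
  rw [lqNorm, if_neg hrhoT]
  have hCQ : C ^ Q ≠ ∞ := ENNReal.rpow_ne_top_of_nonneg hQ.le hC
  have main : ∑' k : S, (w (k : ℤ) / v (k : ℤ)) ^ Q ≤ C ^ Q := by
    rw [ENNReal.tsum_eq_iSup_sum]
    apply iSup_le
    intro F
    set T := ∑ j ∈ F, (w (j : ℤ) / v (j : ℤ)) ^ Q with hTdef
    have hterm : ∀ j ∈ F, (w (j : ℤ) / v (j : ℤ)) ^ Q ≤ C ^ Q := fun j _ =>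
      ENNReal.rpow_le_rpow (ENNReal.div_le_of_le_mul (key _ j.2)) hQ.le
    have hTtop : T ≠ ∞ := by
      rw [hTdef, ← lt_top_iff_ne_top, ENNReal.sum_lt_top]
      exact fun j hj => lt_of_le_of_lt (hterm j hj) (lt_top_iff_ne_top.mpr hCQ)
    -- the test sequence
    set a : ℤ → ℝ≥0∞ := fun k =>
      if k ∈ F.image Subtype.val ∧ v k ≠ 0 ∧ v k ≠ ∞ then (w k / v k) ^ (Q / P) / v k else 0
      with hadef
    have h := hemb a
    -- rewrite the two norms in h
    have hwv0 : ∀ j : S, v (j : ℤ) = 0 → w (j : ℤ) / v (j : ℤ) = 0 := by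
      intro j hv
      have := key (j : ℤ) j.2
      rw [hv, mul_zero, nonpos_iff_eq_zero] at this
      simp [this, hv]
    have hmem : ∀ j : S, (j : ℤ) ∈ F.image Subtype.val ↔ j ∈ F := by
      intro j
      simp only [Finset.mem_image]
      constructor
      · rintro ⟨x, hx, hxj⟩; rwa [Subtype.ext hxj] at hx
      · intro hj; exact ⟨j, hj, rfl⟩
    have hw : ∀ j : S, (a (j : ℤ) * w (j : ℤ)) ^ R
        = if j ∈ F then (w (j : ℤ) / v (j : ℤ)) ^ Q else 0 := by
      intro j
      by_cases hj : j ∈ F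
      · rw [if_pos hj]
        by_cases hgood : v (j : ℤ) ≠ 0 ∧ v (j : ℤ) ≠ ∞
        · have hcond : (j : ℤ) ∈ Finset.image Subtype.val F ∧ v (j : ℤ) ≠ 0 ∧ v (j : ℤ) ≠ ∞ :=
            ⟨(hmem j).mpr hj, hgood⟩
          simp only [a, if_pos hcond]
          have : (w (j : ℤ) / v (j : ℤ)) ^ (Q / P) / v (j : ℤ) * w (j : ℤ)
              = (w (j : ℤ) / v (j : ℤ)) ^ (Q / P) * (w (j : ℤ) / v (j : ℤ)) := by
            rw [div_eq_mul_inv, div_eq_mul_inv]; ring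
          rw [this]
          nth_rewrite 2 [← ENNReal.rpow_one (w (j : ℤ) / v (j : ℤ))]
          rw [← ENNReal.rpow_add_of_nonneg _ _ (by positivity) zero_le_one,
            ← ENNReal.rpow_mul]
          congr 1
          field_simp
          field_simp at hinv
          nlinarith [hinv, hP, hQ, hR]
        · have hcond : ¬((j : ℤ) ∈ Finset.image Subtype.val F ∧ v (j : ℤ) ≠ 0 ∧ v (j : ℤ) ≠ ∞) :=
            fun hcon => hgood hcon.2
          simp only [a, if_neg hcond]
          rw [zero_mul, ENNReal.zero_rpow_of_pos hR]
          rcases not_and_or.mp hgood with hv | hv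
          · push_neg at hv
            rw [hwv0 j hv, ENNReal.zero_rpow_of_pos hQ]
          · push_neg at hv
            rw [hv, ENNReal.div_top, ENNReal.zero_rpow_of_pos hQ]
      · rw [if_neg hj]
        have hcond : ¬((j : ℤ) ∈ Finset.image Subtype.val F ∧ v (j : ℤ) ≠ 0 ∧ v (j : ℤ) ≠ ∞) :=
          fun hcon => hj ((hmem j).mp hcon.1)
        simp only [a, if_neg hcond]
        rw [zero_mul, ENNReal.zero_rpow_of_pos hR]
    have hv : ∀ j : S, (a (j : ℤ) * v (j : ℤ)) ^ P
        = if j ∈ F then (w (j : ℤ) / v (j : ℤ)) ^ Q else 0 := by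
      intro j
      by_cases hj : j ∈ F
      · rw [if_pos hj]
        by_cases hgood : v (j : ℤ) ≠ 0 ∧ v (j : ℤ) ≠ ∞
        · have hcond : (j : ℤ) ∈ Finset.image Subtype.val F ∧ v (j : ℤ) ≠ 0 ∧ v (j : ℤ) ≠ ∞ :=
            ⟨(hmem j).mpr hj, hgood⟩
          simp only [a, if_pos hcond]
          rw [ENNReal.div_mul_cancel hgood.1 hgood.2, ← ENNReal.rpow_mul,
            div_mul_cancel₀ _ hP.ne']
        · have hcond : ¬((j : ℤ) ∈ Finset.image Subtype.val F ∧ v (j : ℤ) ≠ 0 ∧ v (j : ℤ) ≠ ∞) :=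
            fun hcon => hgood hcon.2
          simp only [a, if_neg hcond]
          rw [zero_mul, ENNReal.zero_rpow_of_pos hP]
          rcases not_and_or.mp hgood with hv | hv
          · push_neg at hv
            rw [hwv0 j hv, ENNReal.zero_rpow_of_pos hQ]
          · push_neg at hv
            rw [hv, ENNReal.div_top, ENNReal.zero_rpow_of_pos hQ]
      · rw [if_neg hj]
        have hcond : ¬((j : ℤ) ∈ Finset.image Subtype.val F ∧ v (j : ℤ) ≠ 0 ∧ v (j : ℤ) ≠ ∞) :=
          fun hcon => hj ((hmem j).mp hcon.1)
        simp only [a, if_neg hcond]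
        rw [zero_mul, ENNReal.zero_rpow_of_pos hP]
    have hsumw : ∑' j : S, (a (j : ℤ) * w (j : ℤ)) ^ R = T := by
      rw [tsum_congr hw, tsum_eq_sum (s := F) (fun j hj => if_neg hj)]
      exact Finset.sum_congr rfl fun j hj => if_pos hj
    have hsumv : ∑' j : S, (a (j : ℤ) * v (j : ℤ)) ^ P = T := by
      rw [tsum_congr hv, tsum_eq_sum (s := F) (fun j hj => if_neg hj)]
      exact Finset.sum_congr rfl fun j hj => if_pos hj
    rw [lqNorm, if_neg hr.ne, lqNorm, if_neg hp.ne, ← hRdef, ← hPdef, hsumw, hsumv] at h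
    -- h : T ^ (1/R) ≤ C * T ^ (1/P)
    by_cases hT0 : T = 0
    · rw [hT0]; exact zero_le
    have hsplit : T ^ (1 / R) = T ^ (1 / P) * T ^ (1 / Q) := by
      rw [← ENNReal.rpow_add _ _ hT0 hTtop, hinv]
    rw [hsplit, mul_comm C _] at h
    have hTP0 : T ^ (1 / P) ≠ 0 :=
      (ENNReal.rpow_pos (pos_iff_ne_zero.mpr hT0) hTtop).ne'
    have hTPtop : T ^ (1 / P) ≠ ∞ := ENNReal.rpow_ne_top_of_nonneg (by positivity) hTtop
    have hTQ : T ^ (1 / Q) ≤ C := (ENNReal.mul_le_mul_iff_right hTP0 hTPtop).mp h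
    calc T = (T ^ (1 / Q)) ^ Q := by
            rw [← ENNReal.rpow_mul, one_div_mul_cancel hQ.ne', ENNReal.rpow_one]
      _ ≤ C ^ Q := ENNReal.rpow_le_rpow hTQ hQ.le
  calc (∑' k : S, (w (k : ℤ) / v (k : ℤ)) ^ Q) ^ (1 / Q)
      ≤ (C ^ Q) ^ (1 / Q) := ENNReal.rpow_le_rpow main (by positivity)
    _ = C := by rw [← ENNReal.rpow_mul, mul_one_div_cancel hQ.ne', ENNReal.rpow_one]
end
end

section
/- Let 1 ≤ p < ∞, 0 < q < p, and let v, w be weights on (0,∞). For every x > 0, (∫_x^∞ w)^{1/q} σ_p(0,x) ≲ (∫_x^∞ (∫_y^∞ w)^{q/(p−q)} w(y) [σ_p(0,y)]^{pq/(p−q)} dy)^{(p−q)/(pq)}, with constant depending only on p and q. Consequently, sup_{t ≥ x} (∫_t^∞ w)^{1/q} σ_p(0,t) ≲ (∫_x^∞ (∫_y^∞ w)^{q/(p−q)} w(y)[σ_p(0,y)]^{pq/(p−q)} dy)^{(p−q)/(pq)} for every x > 0. -/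
open MeasureTheory Set ENNReal

noncomputable section

/-- A weight on `(0,∞)`: a nonnegative measurable function (valued in `ℝ≥0∞`) whose
partial integrals `∫_0^x v` are positive and finite for every `x > 0`. -/
def IsWeight (v : ℝ → ℝ≥0∞) : Prop :=
  Measurable v ∧ ∀ x : ℝ, 0 < x →
    0 < (∫⁻ t in Set.Ioo 0 x, v t) ∧ (∫⁻ t in Set.Ioo 0 x, v t) < ∞

/-- `σ_p(x,y)` built from the weight `v`: for `p = 1` it is `ess sup_{x<t<y} v(t)⁻¹`, and for
`p > 1` it is `(∫_x^y v^{1-p'})^{1/p'}` where `p' = p/(p-1)` (so `1/p' = (p-1)/p`). -/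
def sig (p : ℝ) (v : ℝ → ℝ≥0∞) (x y : ℝ) : ℝ≥0∞ :=
  if p = 1 then essSup (fun t => (v t)⁻¹) (volume.restrict (Set.Ioo x y))
  else (∫⁻ t in Set.Ioo x y, v t ^ (1 - p / (p - 1))) ^ ((p - 1) / p)

lemma sig_mono (p : ℝ) (hp : 1 ≤ p) (v : ℝ → ℝ≥0∞) {x y : ℝ} (h : x ≤ y) :
    sig p v 0 x ≤ sig p v 0 y := by
  unfold sig
  split_ifs with h1
  · exact essSup_mono_measure
      (Measure.absolutelyContinuous_of_le
        (Measure.restrict_mono (Ioo_subset_Ioo le_rfl h) le_rfl))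
  · refine ENNReal.rpow_le_rpow (lintegral_mono_set (Ioo_subset_Ioo le_rfl h)) ?_
    have hp0 : 0 < p := lt_of_lt_of_le one_pos hp
    have : 0 ≤ p - 1 := by linarith
    positivity


/-- midpoint existence -/
lemma exists_mid (μ : Measure ℝ) (hatom : ∀ b : ℝ, μ {b} = 0) {x : ℝ}
    (h0 : μ (Ioi x) ≠ 0) (hT : μ (Ioi x) ≠ ⊤) :
    ∃ y, x < y ∧ μ (Ioi x) / 4 ≤ μ (Ioi y) ∧ μ (Ioi y) ≤ μ (Ioi x) / 2 := by
  set A := μ (Ioi x) with hA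
  by_contra hcon
  push_neg at hcon
  -- hcon : ∀ y, x < y → A/4 ≤ μ (Ioi y) → A/2 < μ (Ioi y)
  have hmono : ∀ a b : ℝ, a ≤ b → μ (Ioi b) ≤ μ (Ioi a) :=
    fun a b hab => measure_mono (Ioi_subset_Ioi hab)
  have hA2T : A / 2 ≠ ⊤ := (ENNReal.div_lt_top hT (by norm_num)).ne
  have hA20 : A / 2 ≠ 0 := by simp [ENNReal.div_eq_zero_iff, h0]
  have hA40 : A / 4 ≠ 0 := by simp [ENNReal.div_eq_zero_iff, h0]
  have hA42 : A / 4 ≤ A / 2 := ENNReal.div_le_div le_rfl (by norm_num)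
  -- dichotomy
  have hdich : ∀ y, x < y → μ (Ioi y) < A / 4 ∨ A / 2 < μ (Ioi y) := by
    intro y hy
    rcases lt_or_ge (μ (Ioi y)) (A / 4) with h | h
    · exact Or.inl h
    · exact Or.inr (hcon y hy h)
  -- sup from the right: μ (Ioi b) = ⨆ n, μ (Ioi (b + 1/(n+1)))
  have hsup : ∀ b : ℝ, μ (Ioi b) = ⨆ n : ℕ, μ (Ioi (b + 1 / (n + 1))) := by
    intro b
    have hU : (⋃ n : ℕ, Ioi (b + 1 / ((n : ℝ) + 1))) = Ioi b := by
      ext t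
      simp only [mem_iUnion, mem_Ioi]
      constructor
      · rintro ⟨n, hn⟩
        have : (0:ℝ) < 1 / ((n:ℝ) + 1) := by positivity
        linarith
      · intro ht
        obtain ⟨n, hn⟩ := exists_nat_one_div_lt (sub_pos.mpr ht)
        exact ⟨n, by linarith⟩
    rw [← hU]
    refine Directed.measure_iUnion ?_
    refine (Monotone.directed_le ?_)
    intro m n hmn
    apply Ioi_subset_Ioi
    have hc : (m:ℝ) ≤ (n:ℝ) := Nat.cast_le.mpr hmn
    have : (1:ℝ) / ((n:ℝ) + 1) ≤ 1 / ((m:ℝ) + 1) :=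
      one_div_le_one_div_of_le (by positivity) (by linarith)
    linarith
  -- S nonempty
  have hS : ∃ y, x < y ∧ A / 2 < μ (Ioi y) := by
    have : A / 2 < μ (Ioi x) := ENNReal.half_lt_self h0 hT
    rw [hsup x] at this
    obtain ⟨n, hn⟩ := lt_iSup_iff.mp this
    refine ⟨x + 1 / (n + 1), ?_, hn⟩
    have : (0:ℝ) < 1 / ((n:ℝ) + 1) := by positivity
    linarith
  obtain ⟨y₀, hy₀x, hy₀⟩ := hS
  -- far out the measure is small
  have hsmall : ∃ N : ℕ, μ (Ioi (x + N)) < A / 4 := by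
    have hI : (⋂ n : ℕ, Ioi (x + (n:ℝ))) = ∅ := by
      ext t
      simp only [mem_iInter, mem_Ioi, mem_empty_iff_false, iff_false, not_forall, not_lt]
      obtain ⟨n, hn⟩ := exists_nat_ge (t - x)
      exact ⟨n, by linarith⟩
    have hmeas : μ (⋂ n : ℕ, Ioi (x + (n:ℝ))) = ⨅ n : ℕ, μ (Ioi (x + (n:ℝ))) := by
      refine Directed.measure_iInter
        (fun n => measurableSet_Ioi.nullMeasurableSet) ?_ ⟨0, ?_⟩
      · refine Antitone.directed_ge ?_
        intro m n hmn
        refine Ioi_subset_Ioi ?_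
        have hc : (m:ℝ) ≤ (n:ℝ) := Nat.cast_le.mpr hmn
        linarith
      · exact fun h => hT (top_le_iff.mp (h ▸ hmono x (x + ((0:ℕ):ℝ)) (by simp)))
    rw [hI, measure_empty] at hmeas
    have : (⨅ n : ℕ, μ (Ioi (x + (n:ℝ)))) < A / 4 := by
      rw [← hmeas]; exact pos_iff_ne_zero.mpr hA40
    obtain ⟨n, hn⟩ := iInf_lt_iff.mp this
    exact ⟨n, hn⟩
  obtain ⟨N, hN⟩ := hsmall
  set S : Set ℝ := {y | x < y ∧ A / 2 < μ (Ioi y)} with hSdef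
  have hy₀S : y₀ ∈ S := ⟨hy₀x, hy₀⟩
  have hSne : S.Nonempty := ⟨y₀, hy₀S⟩
  have hSbdd : BddAbove S := by
    refine ⟨x + N, fun z hz => ?_⟩
    by_contra hzc
    push_neg at hzc
    have : μ (Ioi z) ≤ μ (Ioi (x + N)) := hmono _ _ hzc.le
    exact absurd (lt_of_le_of_lt (hz.2.le.trans this) hN) (not_lt.mpr hA42)
  set b := sSup S with hbdef
  have hxb : x < b := lt_of_lt_of_le hy₀x (le_csSup hSbdd hy₀S)
  -- upper bound : μ (Ioi b) ≤ A / 4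
  have hub : μ (Ioi b) ≤ A / 4 := by
    rw [hsup b]
    refine iSup_le fun n => ?_
    set y := b + 1 / ((n:ℝ) + 1) with hydef
    have hby : b < y := by
      have : (0:ℝ) < 1 / ((n:ℝ) + 1) := by positivity
      simp [hydef]; linarith
    have hxy : x < y := hxb.trans hby
    have hynS : y ∉ S := fun hyS => absurd (le_csSup hSbdd hyS) (not_le.mpr hby)
    rcases hdich y hxy with h | h
    · exact h.le
    · exact absurd ⟨hxy, h⟩ hynS
  -- lower bound : A / 2 ≤ μ (Ici b)
  have hlb : A / 2 ≤ μ (Ici b) := by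
    have hI : (⋂ n : ℕ, Ioi (b - 1 / ((n:ℝ) + 1))) = Ici b := by
      ext t
      simp only [mem_iInter, mem_Ioi, mem_Ici]
      constructor
      · intro h
        by_contra hc
        push_neg at hc
        obtain ⟨n, hn⟩ := exists_nat_one_div_lt (sub_pos.mpr hc)
        have := h n
        linarith
      · intro h n
        have : (0:ℝ) < 1 / ((n:ℝ) + 1) := by positivity
        linarith
    obtain ⟨m, hm⟩ := exists_nat_one_div_lt (sub_pos.mpr hxb)
    have hmeas : μ (⋂ n : ℕ, Ioi (b - 1 / ((n:ℝ) + 1))) =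
        ⨅ n : ℕ, μ (Ioi (b - 1 / ((n:ℝ) + 1))) := by
      refine Directed.measure_iInter
        (fun n => measurableSet_Ioi.nullMeasurableSet) ?_ ⟨m, ?_⟩
      · refine Antitone.directed_ge ?_
        intro k n hkn
        refine Ioi_subset_Ioi ?_
        have hc : (k:ℝ) ≤ (n:ℝ) := Nat.cast_le.mpr hkn
        have : (1:ℝ) / ((n:ℝ) + 1) ≤ 1 / ((k:ℝ) + 1) :=
          one_div_le_one_div_of_le (by positivity) (by linarith)
        linarith
      · refine fun h => hT (top_le_iff.mp ?_)
        calc ⊤ = μ (Ioi (b - 1 / ((m:ℝ) + 1))) := h.symm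
        _ ≤ μ (Ioi x) := hmono _ _ (by linarith)
    rw [hI] at hmeas
    rw [hmeas]
    refine le_iInf fun n => ?_
    have hyb : b - 1 / ((n:ℝ) + 1) < b := by
      have : (0:ℝ) < 1 / ((n:ℝ) + 1) := by positivity
      linarith
    obtain ⟨z, hzS, hz⟩ := exists_lt_of_lt_csSup hSne hyb
    exact le_trans hzS.2.le (hmono _ _ hz.le)
  -- combine : contradiction
  have hIci : μ (Ici b) ≤ μ {b} + μ (Ioi b) := by
    rw [← Set.Ioi_insert, Set.insert_eq]
    exact measure_union_le _ _
  rw [hatom b, zero_add] at hIci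
  have hfin : A / 2 ≤ A / 4 := hlb.trans (hIci.trans hub)
  have h1 : (A / 2).toReal ≤ (A / 4).toReal := by
    exact ENNReal.toReal_mono ((ENNReal.div_lt_top hT (by norm_num)).ne) hfin
  rw [ENNReal.toReal_div, ENNReal.toReal_div] at h1
  have h2 : 0 < A.toReal := ENNReal.toReal_pos h0 hT
  norm_num at h1
  linarith


lemma part1 (p q : ℝ) (hp : 1 ≤ p) (hq : 0 < q) (hqp : q < p)
    (v w : ℝ → ℝ≥0∞) (hv : IsWeight v) (hw : IsWeight w) (x : ℝ) (hx : 0 < x) :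
    (∫⁻ t in Ioi x, w t) ^ (1 / q) * sig p v 0 x ≤
      (4 : ℝ≥0∞) ^ (1 / q) * (∫⁻ y in Ioi x, (∫⁻ t in Ioi y, w t) ^ (q / (p - q)) * w y *
          sig p v 0 y ^ (p * q / (p - q))) ^ ((p - q) / (p * q)) := by
  have hp0 : 0 < p := hq.trans hqp
  have hpq : 0 < p - q := sub_pos.mpr hqp
  set r : ℝ := q / (p - q) with hrdef
  set s : ℝ := p * q / (p - q) with hsdef
  set e : ℝ := (p - q) / (p * q) with hedef
  have hr : 0 < r := by rw [hrdef]; positivity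
  have hs : 0 < s := by rw [hsdef]; positivity
  have he : 0 < e := by rw [hedef]; positivity
  have hse : s * e = 1 := by rw [hsdef, hedef]; field_simp
  have hre : (r + 1) * e = 1 / q := by rw [hrdef, hedef]; field_simp; ring
  have hq1 : (0:ℝ) < 1 / q := one_div_pos.mpr hq
  have h4ne : (4 : ℝ≥0∞) ^ (1 / q) ≠ 0 := (ENNReal.rpow_pos (by norm_num) (by norm_num)).ne'
  have h4nt : (4 : ℝ≥0∞) ^ (1 / q) ≠ ⊤ :=
    (ENNReal.rpow_lt_top_of_nonneg hq1.le (by norm_num)).ne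
  by_cases hσ0 : sig p v 0 x = 0
  · rw [hσ0, mul_zero]; exact zero_le
  rcases eq_or_ne (∫⁻ t in Ioi x, w t) 0 with hF0 | hF0
  · rw [hF0, ENNReal.zero_rpow_of_pos hq1, zero_mul]; exact zero_le
  have hσs : sig p v 0 x ^ s ≠ 0 := by
    rw [Ne, ENNReal.rpow_eq_zero_iff]
    rintro (⟨h, -⟩ | ⟨-, h⟩)
    · exact hσ0 h
    · linarith
  rcases eq_or_ne (∫⁻ t in Ioi x, w t) ⊤ with hFT | hFT
  · -- infinite tail : RHS integral is infinite
    have hFy : ∀ y, x < y → (∫⁻ t in Ioi y, w t) = ⊤ := by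
      intro y hy
      by_contra hne
      have hdisj : Disjoint (Ioc x y) (Ioi y) :=
        Set.disjoint_left.mpr fun a ha hb => absurd hb (not_lt.mpr ha.2)
      have hsplit : (∫⁻ t in Ioi x, w t) = (∫⁻ t in Ioc x y, w t) + ∫⁻ t in Ioi y, w t := by
        rw [← lintegral_union measurableSet_Ioi hdisj, Ioc_union_Ioi_eq_Ioi hy.le]
      have h1 : (∫⁻ t in Ioc x y, w t) ≠ ⊤ := by
        refine (lt_of_le_of_lt (lintegral_mono_set ?_) ((hw.2 (y+1) (by linarith)).2)).ne
        intro t ht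
        exact ⟨hx.trans ht.1, by linarith [ht.2]⟩
      rw [hsplit] at hFT
      exact ENNReal.add_ne_top.mpr ⟨h1, hne⟩ hFT
    have hge : (⊤ * sig p v 0 x ^ s) * (∫⁻ t in Ioi x, w t) ≤
        ∫⁻ y in Ioi x, (∫⁻ t in Ioi y, w t) ^ r * w y * sig p v 0 y ^ s := by
      rw [← lintegral_const_mul _ hw.1]
      refine setLIntegral_mono' measurableSet_Ioi fun y hy => ?_
      rw [hFy y hy, ENNReal.top_rpow_of_pos hr]
      calc ⊤ * sig p v 0 x ^ s * w y = ⊤ * w y * sig p v 0 x ^ s := by ring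
        _ ≤ ⊤ * w y * sig p v 0 y ^ s :=
          mul_le_mul_right (ENNReal.rpow_le_rpow (sig_mono p hp v hy.out.le) hs.le) _
    have htop : (⊤ * sig p v 0 x ^ s) * (∫⁻ t in Ioi x, w t) = ⊤ := by
      rw [hFT, ENNReal.top_mul hσs]
      simp
    have hItop : (∫⁻ y in Ioi x, (∫⁻ t in Ioi y, w t) ^ r * w y * sig p v 0 y ^ s) = ⊤ :=
      top_le_iff.mp (htop ▸ hge)
    rw [hItop, ENNReal.top_rpow_of_pos he, ENNReal.mul_top h4ne]
    exact le_top
  -- main case : 0 < Fx < ∞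
  have hatom : ∀ b : ℝ, (volume.withDensity w) {b} = 0 := by
    intro b
    rw [withDensity_apply w (measurableSet_singleton b)]
    exact setLIntegral_measure_zero _ _ (measure_singleton b)
  have hμ : ∀ y : ℝ, (volume.withDensity w) (Ioi y) = ∫⁻ t in Ioi y, w t :=
    fun y => withDensity_apply w measurableSet_Ioi
  obtain ⟨y₁, hxy₁, h4le, hle2⟩ := exists_mid (volume.withDensity w) hatom
    (by rw [hμ]; exact hF0) (by rw [hμ]; exact hFT)
  simp only [hμ] at h4le hle2
  have hq4ne : (∫⁻ t in Ioi x, w t) / 4 ≠ 0 := by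
    rw [Ne, ENNReal.div_eq_zero_iff]
    rintro (h | h)
    · exact hF0 h
    · norm_num at h
  have hq4nt : (∫⁻ t in Ioi x, w t) / 4 ≠ ⊤ := (ENNReal.div_lt_top hFT (by norm_num)).ne
  have hdisj : Disjoint (Ioc x y₁) (Ioi y₁) :=
    Set.disjoint_left.mpr fun a ha hb => absurd hb (not_lt.mpr ha.2)
  have hsplit : (∫⁻ t in Ioi x, w t) = (∫⁻ t in Ioc x y₁, w t) + ∫⁻ t in Ioi y₁, w t := by
    rw [← lintegral_union measurableSet_Ioi hdisj, Ioc_union_Ioi_eq_Ioi hxy₁.le]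
  have hIoc : (∫⁻ t in Ioi x, w t) / 2 ≤ ∫⁻ t in Ioc x y₁, w t := by
    have h1 : (∫⁻ t in Ioi x, w t) ≤ (∫⁻ t in Ioc x y₁, w t) + (∫⁻ t in Ioi x, w t) / 2 :=
      hsplit.le.trans (add_le_add_right hle2 _)
    have h2 := tsub_le_iff_right.mpr h1
    rwa [ENNReal.sub_half hFT] at h2
  have hKB : sig p v 0 x ^ s * ((∫⁻ t in Ioi x, w t) / 4) ^ (r + 1) ≤
      ∫⁻ y in Ioi x, (∫⁻ t in Ioi y, w t) ^ r * w y * sig p v 0 y ^ s := by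
    have hc1 : ((∫⁻ t in Ioi x, w t) / 4) ^ r * sig p v 0 x ^ s * ((∫⁻ t in Ioi x, w t) / 2)
        ≤ ∫⁻ y in Ioi x, (∫⁻ t in Ioi y, w t) ^ r * w y * sig p v 0 y ^ s := by
      calc ((∫⁻ t in Ioi x, w t) / 4) ^ r * sig p v 0 x ^ s * ((∫⁻ t in Ioi x, w t) / 2)
          ≤ ((∫⁻ t in Ioi x, w t) / 4) ^ r * sig p v 0 x ^ s * ∫⁻ t in Ioc x y₁, w t :=
            mul_le_mul_right hIoc _
        _ = ∫⁻ y in Ioc x y₁, (((∫⁻ t in Ioi x, w t) / 4) ^ r * sig p v 0 x ^ s) * w y :=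
            (lintegral_const_mul _ hw.1).symm
        _ ≤ ∫⁻ y in Ioc x y₁, (∫⁻ t in Ioi y, w t) ^ r * w y * sig p v 0 y ^ s := by
            refine setLIntegral_mono' measurableSet_Ioc fun y hy => ?_
            have hFy : (∫⁻ t in Ioi x, w t) / 4 ≤ ∫⁻ t in Ioi y, w t :=
              h4le.trans (lintegral_mono_set (Ioi_subset_Ioi hy.2))
            calc ((∫⁻ t in Ioi x, w t) / 4) ^ r * sig p v 0 x ^ s * w y
                = ((∫⁻ t in Ioi x, w t) / 4) ^ r * w y * sig p v 0 x ^ s := by ring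
              _ ≤ (∫⁻ t in Ioi y, w t) ^ r * w y * sig p v 0 y ^ s :=
                mul_le_mul' (mul_le_mul_left (ENNReal.rpow_le_rpow hFy hr.le) _)
                  (ENNReal.rpow_le_rpow (sig_mono p hp v hy.1.le) hs.le)
        _ ≤ ∫⁻ y in Ioi x, (∫⁻ t in Ioi y, w t) ^ r * w y * sig p v 0 y ^ s :=
            lintegral_mono_set fun t ht => ht.1
    have heq : sig p v 0 x ^ s * ((∫⁻ t in Ioi x, w t) / 4) ^ (r + 1) =
        ((∫⁻ t in Ioi x, w t) / 4) ^ r * sig p v 0 x ^ s * ((∫⁻ t in Ioi x, w t) / 4) := by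
      rw [ENNReal.rpow_add r 1 hq4ne hq4nt, ENNReal.rpow_one]; ring
    rw [heq]
    exact le_trans (mul_le_mul_right (ENNReal.div_le_div le_rfl (by norm_num)) _) hc1
  calc (∫⁻ t in Ioi x, w t) ^ (1 / q) * sig p v 0 x
      = (4 : ℝ≥0∞) ^ (1 / q) *
          ((sig p v 0 x ^ s * ((∫⁻ t in Ioi x, w t) / 4) ^ (r + 1)) ^ e) := by
        rw [ENNReal.mul_rpow_of_nonneg _ _ he.le, ← ENNReal.rpow_mul, hse, ENNReal.rpow_one,
          ← ENNReal.rpow_mul, hre, div_eq_mul_inv (∫⁻ t in Ioi x, w t) 4, ENNReal.mul_rpow_of_nonneg _ _ hq1.le,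
          ENNReal.inv_rpow]
        rw [show (4 : ℝ≥0∞) ^ (1 / q) * (sig p v 0 x *
            ((∫⁻ t in Ioi x, w t) ^ (1 / q) * ((4 : ℝ≥0∞) ^ (1 / q))⁻¹)) =
            ((4 : ℝ≥0∞) ^ (1 / q) * ((4 : ℝ≥0∞) ^ (1 / q))⁻¹) *
              ((∫⁻ t in Ioi x, w t) ^ (1 / q) * sig p v 0 x) from by ring,
          ENNReal.mul_inv_cancel h4ne h4nt, one_mul]
    _ ≤ (4 : ℝ≥0∞) ^ (1 / q) *
          (∫⁻ y in Ioi x, (∫⁻ t in Ioi y, w t) ^ r * w y * sig p v 0 y ^ s) ^ e :=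
        mul_le_mul_right (ENNReal.rpow_le_rpow hKB he.le) _

/-- For `1 ≤ p`, `0 < q < p` and weights `v, w`, the pointwise bound
`(∫_x^∞ w)^{1/q} σ_p(0,x) ≲ (∫_x^∞ (∫_y^∞ w)^{q/(p−q)} w(y) [σ_p(0,y)]^{pq/(p−q)} dy)^{(p−q)/(pq)}`
holds for every `x > 0`, and consequently the same bound holds for
`sup_{t ≥ x} (∫_t^∞ w)^{1/q} σ_p(0,t)`, with constant depending only on `p` and `q`. -/
theorem stmt16 (p q : ℝ) (hp : 1 ≤ p) (hq : 0 < q) (hqp : q < p) :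
    ∃ C : ℝ≥0∞, C < ∞ ∧
      ∀ v w : ℝ → ℝ≥0∞, IsWeight v → IsWeight w → ∀ x : ℝ, 0 < x →
        (∫⁻ t in Ioi x, w t) ^ (1 / q) * sig p v 0 x ≤
            C * (∫⁻ y in Ioi x, (∫⁻ t in Ioi y, w t) ^ (q / (p - q)) * w y *
                  sig p v 0 y ^ (p * q / (p - q))) ^ ((p - q) / (p * q)) ∧
          (⨆ t ∈ Ici x, (∫⁻ s in Ioi t, w s) ^ (1 / q) * sig p v 0 t) ≤
            C * (∫⁻ y in Ioi x, (∫⁻ t in Ioi y, w t) ^ (q / (p - q)) * w y *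
                  sig p v 0 y ^ (p * q / (p - q))) ^ ((p - q) / (p * q)) := by
  have hp0 : 0 < p := hq.trans hqp
  have hpq : 0 < p - q := sub_pos.mpr hqp
  have hexp : (0:ℝ) ≤ (p - q) / (p * q) := by positivity
  refine ⟨(4 : ℝ≥0∞) ^ (1 / q),
    ENNReal.rpow_lt_top_of_nonneg (one_div_pos.mpr hq).le (by norm_num), ?_⟩
  intro v w hv hw x hx
  refine ⟨part1 p q hp hq hqp v w hv hw x hx, ?_⟩
  refine iSup₂_le fun t ht => ?_
  refine (part1 p q hp hq hqp v w hv hw t (lt_of_lt_of_le hx ht)).trans ?_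
  exact mul_le_mul_right
    (ENNReal.rpow_le_rpow (lintegral_mono_set (Ioi_subset_Ioi ht)) hexp) _
end
end

section
/- Let 0 < q < p < ∞, 1 ≤ p, v, w weights on (0,∞), and 0 ≤ a < b ≤ ∞ with a an interior point x_k and b = x_{k+1}. Then (∫_a^b (∫_x^∞ w)^{q/(p−q)} w(x)[σ_p(0,x)]^{pq/(p−q)} dx)^{(p−q)/(pq)} ≲ (∫_a^b (∫_x^b w)^{q/(p−q)} w(x) [σ_p(a,x)]^{pq/(p−q)} dx)^{(p−q)/(pq)} + sup_{t ∈ [a,∞)} (∫_t^∞ w)^{1/q} σ_p(0,t), with constant depending only on p and q. -/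
open MeasureTheory Set ENNReal

noncomputable section

lemma two_rpow_helper (u v : ℝ≥0∞) {ρ : ℝ} (hρ : 0 ≤ ρ) :
    (u + v) ^ ρ ≤ 2 ^ ρ * (u ^ ρ + v ^ ρ) := by
  calc (u + v) ^ ρ ≤ (2 * max u v) ^ ρ := by
        apply ENNReal.rpow_le_rpow _ hρ
        rcases le_total u v with h | h
        · rw [two_mul]; exact add_le_add (h.trans (le_max_right u v)) (le_max_right u v)
        · rw [two_mul]; exact add_le_add (le_max_left u v) (h.trans (le_max_left u v))
    _ = 2 ^ ρ * (max u v) ^ ρ := ENNReal.mul_rpow_of_nonneg _ _ hρ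
    _ ≤ 2 ^ ρ * (u ^ ρ + v ^ ρ) := by
        gcongr
        rcases max_cases u v with ⟨h, _⟩ | ⟨h, _⟩ <;> rw [h]
        · exact le_add_right le_rfl
        · exact le_add_left le_rfl

/-- integral of `w` over an upper set all of whose points have tail integral `< θ`. -/
lemma upper_set_lintegral_le (w : ℝ → ℝ≥0∞) (hw : Measurable w) (θ : ℝ≥0∞) (U : Set ℝ)
    (hup : ∀ ⦃x y : ℝ⦄, x ∈ U → x ≤ y → y ∈ U)
    (hθ : ∀ x ∈ U, (∫⁻ t in Ioi x, w t) ≤ θ) : (∫⁻ x in U, w x) ≤ θ := by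
  classical
  set S : Set ℚ := {q : ℚ | (q : ℝ) ∈ U} with hS
  set U' : Set ℝ := ⋃ q : S, Ioi (q : ℝ) with hU'
  have hU'm : MeasurableSet U' := MeasurableSet.iUnion fun q => measurableSet_Ioi
  have hU'sub : U' ⊆ U := by
    rintro x hx
    simp only [hU', mem_iUnion] at hx
    obtain ⟨⟨q, hq⟩, hxq⟩ := hx
    exact hup hq (le_of_lt hxq)
  have hdiff : (U \ U').Subsingleton := by
    intro x hx y hy
    by_contra hne
    rcases lt_or_gt_of_ne hne with h | h
    · obtain ⟨q, hq1, hq2⟩ := exists_rat_btwn h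
      exact hy.2 (mem_iUnion.mpr ⟨⟨q, hup hx.1 hq1.le⟩, hq2⟩)
    · obtain ⟨q, hq1, hq2⟩ := exists_rat_btwn h
      exact hx.2 (mem_iUnion.mpr ⟨⟨q, hup hy.1 hq1.le⟩, hq2⟩)
  have hdiff0 : volume (U \ U') = 0 := hdiff.measure_zero _
  have h1 : (∫⁻ x in U, w x) ≤ (∫⁻ x in U', w x) + (∫⁻ x in U \ U', w x) := by
    refine le_trans (lintegral_mono_set (show U ⊆ U' ∪ (U \ U') by
      intro x hx; by_cases h : x ∈ U'
      · exact Or.inl h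
      · exact Or.inr ⟨hx, h⟩)) (lintegral_union_le _ _ _)
  have h2 : (∫⁻ x in U \ U', w x) = 0 := by
    rw [Measure.restrict_eq_zero.mpr hdiff0, lintegral_zero_measure]
  have h3 : (∫⁻ x in U', w x) ≤ θ := by
    rw [← withDensity_apply _ hU'm]
    have hdir : Directed (· ⊆ ·) (fun q : S => Ioi (q : ℝ)) := by
      rintro ⟨q1, hq1⟩ ⟨q2, hq2⟩
      rcases le_total q1 q2 with h | h
      · exact ⟨⟨q1, hq1⟩, subset_rfl, Ioi_subset_Ioi (by exact_mod_cast h)⟩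
      · exact ⟨⟨q2, hq2⟩, Ioi_subset_Ioi (by exact_mod_cast h), subset_rfl⟩
    rw [hU', Directed.measure_iUnion hdir]
    refine iSup_le fun q => ?_
    rw [withDensity_apply _ measurableSet_Ioi]
    exact hθ _ q.2
  calc (∫⁻ x in U, w x) ≤ (∫⁻ x in U', w x) + (∫⁻ x in U \ U', w x) := h1
    _ ≤ θ := by rw [h2, add_zero]; exact h3


lemma lemD (w : ℝ → ℝ≥0∞) (hw : Measurable w) (a β : ℝ) {s : ℝ} (hs : 1 < s)
    (hB0 : (∫⁻ t in Ioi β, w t) ≠ 0) (hB : (∫⁻ t in Ioi β, w t) ≠ ∞) :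
    (∫⁻ x in Ioo a β, (∫⁻ t in Ioi x, w t) ^ (-s) * w x) ≤
      2 * (1 - (2:ℝ≥0∞) ^ (1 - s))⁻¹ * (∫⁻ t in Ioi β, w t) ^ (1 - s) := by
  set F : ℝ → ℝ≥0∞ := fun x => ∫⁻ t in Ioi x, w t with hF
  have hFanti : Antitone F := fun x y hxy => lintegral_mono_set (Ioi_subset_Ioi hxy)
  have hFmeas : Measurable F := hFanti.measurable
  set B : ℝ≥0∞ := F β with hBdef
  set E : ℕ → Set ℝ := fun k => {x | x ∈ Ioo a β ∧ 2 ^ k * B ≤ F x ∧ F x < 2 ^ (k + 1) * B}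
    with hE
  set S1 : Set ℝ := {x | x ∈ Ioo a β ∧ F x = ∞} with hS1
  have hS1m : MeasurableSet S1 := by
    have hEq : S1 = Ioo a β ∩ F ⁻¹' {∞} := by ext x; simp [hS1]
    rw [hEq]; exact measurableSet_Ioo.inter (hFmeas (measurableSet_singleton ∞))
  have cover : Ioo a β ⊆ S1 ∪ ⋃ k, E k := by
    intro x hx
    by_cases hFx : F x = ∞
    · exact Or.inl ⟨hx, hFx⟩
    · right
      have hBle : B ≤ F x := hFanti hx.2.le
      have hdivfin : F x / B ≠ ∞ := (ENNReal.div_lt_top hFx hB0).ne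
      have h1le : (1 : ℝ≥0∞) ≤ F x / B := by
        rw [ENNReal.le_div_iff_mul_le (Or.inl hB0) (Or.inl hB), one_mul]; exact hBle
      set t : ℝ := (F x / B).toReal with ht
      have ht1 : (1 : ℝ) ≤ t := by
        have h := ENNReal.toReal_mono hdivfin h1le
        rwa [ENNReal.toReal_one] at h
      set n : ℕ := ⌊t⌋₊ with hn
      have hn1 : 1 ≤ n := Nat.le_floor (by exact_mod_cast ht1)
      set k : ℕ := Nat.log 2 n with hk
      have h2k : 2 ^ k ≤ n := Nat.pow_log_le_self 2 (by omega)
      have hk2 : n < 2 ^ (k + 1) := Nat.lt_pow_succ_log_self (by norm_num) n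
      have hreal1 : (2 : ℝ) ^ k ≤ t :=
        le_trans (by exact_mod_cast h2k) (Nat.floor_le (by linarith))
      have hreal2 : t < (2 : ℝ) ^ (k + 1) := by
        have := Nat.lt_floor_add_one t
        have h2 : (n : ℝ) + 1 ≤ (2 : ℝ) ^ (k + 1) := by exact_mod_cast hk2
        linarith
      have hdiv_eq : F x / B = ENNReal.ofReal t := (ENNReal.ofReal_toReal hdivfin).symm
      have hlow : (2 : ℝ≥0∞) ^ k ≤ F x / B := by
        rw [hdiv_eq]
        calc (2 : ℝ≥0∞) ^ k = ENNReal.ofReal ((2:ℝ) ^ k) := by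
              rw [ENNReal.ofReal_pow (by norm_num)]; norm_num
          _ ≤ ENNReal.ofReal t := ENNReal.ofReal_le_ofReal hreal1
      have hhigh : F x / B < (2 : ℝ≥0∞) ^ (k + 1) := by
        rw [hdiv_eq]
        calc ENNReal.ofReal t < ENNReal.ofReal ((2:ℝ) ^ (k+1)) :=
              (ENNReal.ofReal_lt_ofReal_iff (by positivity)).mpr hreal2
          _ = (2 : ℝ≥0∞) ^ (k + 1) := by
              rw [ENNReal.ofReal_pow (by norm_num)]; norm_num
      refine mem_iUnion.mpr ⟨k, hx, ?_, ?_⟩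
      · exact (ENNReal.le_div_iff_mul_le (Or.inl hB0) (Or.inl hB)).mp hlow
      · exact (ENNReal.div_lt_iff (Or.inl hB0) (Or.inl hB)).mp hhigh
  -- measurability of E k
  have hEm : ∀ k, MeasurableSet (E k) := by
    intro k
    have hEq : E k = Ioo a β ∩ (F ⁻¹' {y | 2 ^ k * B ≤ y} ∩ F ⁻¹' {y | y < 2 ^ (k+1) * B}) := by
      ext x; simp [hE, mem_setOf_eq]
    rw [hEq]
    exact measurableSet_Ioo.inter ((hFmeas (measurableSet_le measurable_const measurable_id)).inter (hFmeas (measurableSet_lt measurable_id measurable_const)))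
  set r0 : ℝ≥0∞ := (2:ℝ≥0∞) ^ (1 - s) with hr0
  have h2 : (2:ℝ≥0∞) ≠ 0 := two_ne_zero
  have h2t : (2:ℝ≥0∞) ≠ ∞ := ENNReal.ofNat_ne_top
  have hS1zero : (∫⁻ x in S1, F x ^ (-s) * w x) ≤ 0 := by
    have hb : ∀ x ∈ S1, F x ^ (-s) * w x ≤ (fun _ : ℝ => (0:ℝ≥0∞)) x := by
      intro x hx
      show F x ^ (-s) * w x ≤ 0
      rw [hx.2, ENNReal.top_rpow_of_neg (by linarith), zero_mul]
    have h := setLIntegral_mono (μ := volume) (s := S1)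
      (f := fun x => F x ^ (-s) * w x) (g := fun _ => (0:ℝ≥0∞)) measurable_const hb
    simpa using h
  have hEk : ∀ k, (∫⁻ x in E k, F x ^ (-s) * w x) ≤ 2 * B ^ (1-s) * r0 ^ k := by
    intro k
    have hbase0 : (2:ℝ≥0∞) ^ k * B ≠ 0 := mul_ne_zero (pow_ne_zero _ h2) hB0
    have hbaset : (2:ℝ≥0∞) ^ k * B ≠ ∞ := ENNReal.mul_ne_top (ENNReal.pow_ne_top h2t) hB
    have hc : ((2:ℝ≥0∞) ^ k * B) ^ (-s) ≠ ∞ := by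
      rw [ENNReal.rpow_neg]
      refine ENNReal.inv_ne_top.mpr ?_
      simp [ENNReal.rpow_eq_zero_iff, hbase0, hbaset]
    have hstep : (∫⁻ x in E k, F x ^ (-s) * w x) ≤
        ((2:ℝ≥0∞) ^ k * B) ^ (-s) * ∫⁻ x in E k, w x := by
      rw [← lintegral_const_mul' _ _ hc]
      refine setLIntegral_mono ((measurable_const.mul hw)) ?_
      intro x hx
      show F x ^ (-s) * w x ≤ ((2:ℝ≥0∞) ^ k * B) ^ (-s) * w x
      refine mul_le_mul_left ?_ _
      rw [ENNReal.rpow_neg, ENNReal.rpow_neg]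
      exact ENNReal.inv_le_inv.mpr (ENNReal.rpow_le_rpow hx.2.1 (by linarith))
    have hnu : (∫⁻ x in E k, w x) ≤ 2 ^ (k+1) * B := by
      refine le_trans (lintegral_mono_set (show E k ⊆ {x | F x < 2 ^ (k+1) * B} from
        fun x hx => hx.2.2)) ?_
      refine upper_set_lintegral_le w hw _ _ ?_ ?_
      · intro x y hx hxy
        exact lt_of_le_of_lt (hFanti hxy) hx
      · intro x hx
        exact le_of_lt hx
    have key : ((2:ℝ≥0∞) ^ k * B) ^ (-s) * (2 ^ (k+1) * B) = 2 * B ^ (1-s) * r0 ^ k := by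
      have hBB : B ^ (-s) * B = B ^ (1-s) := by
        nth_rewrite 2 [← ENNReal.rpow_one B]
        rw [← ENNReal.rpow_add _ _ hB0 hB]
        ring_nf
        rfl
      have h22 : (2:ℝ≥0∞) ^ ((k:ℝ) * (-s)) * 2 ^ ((k:ℝ)+1) = 2 * 2 ^ ((1-s) * (k:ℝ)) := by
        rw [← ENNReal.rpow_add _ _ h2 h2t]
        have hexp : (k:ℝ) * (-s) + ((k:ℝ)+1) = 1 + (1-s) * (k:ℝ) := by ring
        rw [hexp, ENNReal.rpow_add _ _ h2 h2t, ENNReal.rpow_one]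
      calc ((2:ℝ≥0∞) ^ k * B) ^ (-s) * (2 ^ (k+1) * B)
          = ((2:ℝ≥0∞) ^ ((k:ℝ)) ) ^ (-s) * B ^ (-s) * (2 ^ (((k:ℝ))+1) * B) := by
            rw [ENNReal.mul_rpow_of_ne_top (ENNReal.pow_ne_top h2t) hB,
              ENNReal.rpow_natCast]
            congr 2
            rw [← ENNReal.rpow_natCast (2:ℝ≥0∞) (k+1)]
            congr 1
            push_cast; ring
        _ = (2:ℝ≥0∞) ^ ((k:ℝ) * (-s)) * B ^ (-s) * (2 ^ (((k:ℝ))+1) * B) := by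
            rw [← ENNReal.rpow_mul]
        _ = ((2:ℝ≥0∞) ^ ((k:ℝ) * (-s)) * 2 ^ ((k:ℝ)+1)) * (B ^ (-s) * B) := by ring
        _ = (2 * 2 ^ ((1-s) * (k:ℝ))) * B ^ (1-s) := by rw [hBB, h22]
        _ = 2 * B ^ (1-s) * r0 ^ k := by
            rw [hr0, ← ENNReal.rpow_natCast ((2:ℝ≥0∞) ^ (1-s)) k, ← ENNReal.rpow_mul]
            ring
    calc (∫⁻ x in E k, F x ^ (-s) * w x)
        ≤ ((2:ℝ≥0∞) ^ k * B) ^ (-s) * ∫⁻ x in E k, w x := hstep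
      _ ≤ ((2:ℝ≥0∞) ^ k * B) ^ (-s) * (2 ^ (k+1) * B) := by gcongr
      _ = 2 * B ^ (1-s) * r0 ^ k := key
  show (∫⁻ x in Ioo a β, F x ^ (-s) * w x) ≤ 2 * (1 - r0)⁻¹ * B ^ (1-s)
  calc (∫⁻ x in Ioo a β, F x ^ (-s) * w x)
      ≤ ∫⁻ x in S1 ∪ ⋃ k, E k, F x ^ (-s) * w x := lintegral_mono_set cover
    _ ≤ (∫⁻ x in S1, F x ^ (-s) * w x) + ∫⁻ x in ⋃ k, E k, F x ^ (-s) * w x :=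
        lintegral_union_le _ _ _
    _ ≤ 0 + ∑' k, ∫⁻ x in E k, F x ^ (-s) * w x :=
        add_le_add hS1zero (lintegral_iUnion_le _ _)
    _ ≤ ∑' k, 2 * B ^ (1-s) * r0 ^ k := by
        rw [zero_add]; exact ENNReal.tsum_le_tsum hEk
    _ = 2 * B ^ (1-s) * ∑' k, r0 ^ k := ENNReal.tsum_mul_left
    _ = 2 * B ^ (1-s) * (1 - r0)⁻¹ := by rw [ENNReal.tsum_geometric]
    _ = 2 * (1 - r0)⁻¹ * B ^ (1-s) := by ring


lemma sig_mono_s17 (p : ℝ) (hp : 1 ≤ p) (v : ℝ → ℝ≥0∞) {a a' x x' : ℝ} (ha : a ≤ a')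
    (hx : x' ≤ x) : sig p v a' x' ≤ sig p v a x := by
  have hsub : Ioo a' x' ⊆ Ioo a x := Ioo_subset_Ioo ha hx
  unfold sig
  split_ifs
  · exact essSup_mono_measure' (Measure.restrict_mono hsub le_rfl)
  · exact ENNReal.rpow_le_rpow (lintegral_mono_set hsub)
      (div_nonneg (by linarith) (by linarith))

lemma sig_meas (p : ℝ) (hp : 1 ≤ p) (v : ℝ → ℝ≥0∞) (a : ℝ) :
    Measurable fun x => sig p v a x :=
  Monotone.measurable (fun _ _ hxy => sig_mono_s17 p hp v le_rfl hxy)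

lemma sig_ne_zero (p : ℝ) (hp : 1 ≤ p) (v : ℝ → ℝ≥0∞) (hv : IsWeight v) {x : ℝ}
    (hx : 0 < x) : sig p v 0 x ≠ 0 := by
  obtain ⟨hvm, hint⟩ := hv
  obtain ⟨hpos, hfin⟩ := hint x hx
  intro h0
  have htop : ∀ᵐ t ∂(volume.restrict (Ioo 0 x)), v t = ∞ := by
    unfold sig at h0
    split_ifs at h0 with hp1
    · have h := ENNReal.essSup_eq_zero_iff.mp h0
      filter_upwards [h] with t ht
      have : (v t)⁻¹ = 0 := ht
      simpa [ENNReal.inv_eq_zero] using this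
    · have hp1' : 1 < p := hp.lt_of_ne (Ne.symm hp1)
      have hexpneg : 1 - p / (p - 1) < 0 := by
        rw [sub_neg, lt_div_iff₀ (by linarith)]; linarith
      rcases ENNReal.rpow_eq_zero_iff.mp h0 with ⟨hI0, _⟩ | ⟨_, hlt⟩
      · have hmeas : Measurable fun t => v t ^ (1 - p / (p - 1)) :=
          ENNReal.continuous_rpow_const.measurable.comp hvm
        have h := (lintegral_eq_zero_iff hmeas).mp hI0
        filter_upwards [h] with t ht
        have : v t ^ (1 - p / (p - 1)) = 0 := ht
        rcases ENNReal.rpow_eq_zero_iff.mp this with ⟨_, hc⟩ | ⟨h', _⟩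
        · linarith
        · exact h'
      · have : (0:ℝ) ≤ (p - 1) / p := div_nonneg (by linarith) (by linarith)
        linarith
  have : (∫⁻ t in Ioo 0 x, v t) = ∞ := by
    have heq : (∫⁻ t in Ioo 0 x, v t) = ∫⁻ _ in Ioo 0 x, (∞:ℝ≥0∞) :=
      lintegral_congr_ae htop
    rw [heq, setLIntegral_const, Real.volume_Ioo]
    rw [ENNReal.top_mul (by simpa [ENNReal.ofReal_eq_zero] using hx)]
  exact absurd this hfin.ne

lemma sig_subadd (p : ℝ) (hp : 1 ≤ p) (v : ℝ → ℝ≥0∞) {a x : ℝ} (ha : 0 ≤ a) (hax : a ≤ x) :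
    sig p v 0 x ≤ sig p v 0 a + sig p v a x := by
  unfold sig
  split_ifs with hp1
  · set c1 := essSup (fun t => (v t)⁻¹) (volume.restrict (Ioo 0 a)) with hc1
    set c2 := essSup (fun t => (v t)⁻¹) (volume.restrict (Ioo a x)) with hc2
    refine essSup_le_of_ae_le _ ?_
    have h1 : ∀ᵐ t ∂(volume : Measure ℝ), t ∈ Ioo 0 a → (v t)⁻¹ ≤ c1 :=
      (ae_restrict_iff' measurableSet_Ioo).mp (ENNReal.ae_le_essSup _)
    have h2 : ∀ᵐ t ∂(volume : Measure ℝ), t ∈ Ioo a x → (v t)⁻¹ ≤ c2 :=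
      (ae_restrict_iff' measurableSet_Ioo).mp (ENNReal.ae_le_essSup _)
    have h3 : ∀ᵐ t ∂(volume : Measure ℝ), t ≠ a := by
      rw [ae_iff]
      simpa using measure_singleton a
    refine (ae_restrict_iff' measurableSet_Ioo).mpr ?_
    filter_upwards [h1, h2, h3] with t ht1 ht2 ht3 htx
    rcases lt_or_gt_of_ne ht3 with h | h
    · exact le_trans (ht1 ⟨htx.1, h⟩) le_self_add
    · exact le_trans (ht2 ⟨h, htx.2⟩) le_add_self
  · have hexp0 : (0:ℝ) ≤ (p - 1) / p := div_nonneg (by linarith) (by linarith)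
    have hexp1 : (p - 1) / p ≤ 1 := by
      rw [div_le_one (by linarith)]; linarith
    have hsing : (∫⁻ t in ({a} : Set ℝ), v t ^ (1 - p / (p - 1))) = 0 := by
      rw [Measure.restrict_eq_zero.mpr (measure_singleton a), lintegral_zero_measure]
    have hsplit : (∫⁻ t in Ioo 0 x, v t ^ (1 - p / (p - 1))) ≤
        (∫⁻ t in Ioo 0 a, v t ^ (1 - p / (p - 1))) +
          ∫⁻ t in Ioo a x, v t ^ (1 - p / (p - 1)) := by
      have hcov : Ioo 0 x ⊆ (Ioo 0 a ∪ Ioo a x) ∪ {a} := by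
        intro t ht
        by_cases h : t = a
        · exact Or.inr h
        · rcases lt_or_gt_of_ne h with hlt | hgt
          · exact Or.inl (Or.inl ⟨ht.1, hlt⟩)
          · exact Or.inl (Or.inr ⟨hgt, ht.2⟩)
      calc (∫⁻ t in Ioo 0 x, v t ^ (1 - p / (p - 1)))
          ≤ ∫⁻ t in (Ioo 0 a ∪ Ioo a x) ∪ {a}, v t ^ (1 - p / (p - 1)) :=
            lintegral_mono_set hcov
        _ ≤ (∫⁻ t in Ioo 0 a ∪ Ioo a x, v t ^ (1 - p / (p - 1))) +
              ∫⁻ t in ({a} : Set ℝ), v t ^ (1 - p / (p - 1)) := lintegral_union_le _ _ _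
        _ ≤ ((∫⁻ t in Ioo 0 a, v t ^ (1 - p / (p - 1))) +
              ∫⁻ t in Ioo a x, v t ^ (1 - p / (p - 1))) + 0 :=
            add_le_add (lintegral_union_le _ _ _) (le_of_eq hsing)
        _ = _ := add_zero _
    calc (∫⁻ t in Ioo 0 x, v t ^ (1 - p / (p - 1))) ^ ((p - 1) / p)
        ≤ ((∫⁻ t in Ioo 0 a, v t ^ (1 - p / (p - 1))) +
            ∫⁻ t in Ioo a x, v t ^ (1 - p / (p - 1))) ^ ((p - 1) / p) :=
          ENNReal.rpow_le_rpow hsplit hexp0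
      _ ≤ _ := ENNReal.rpow_add_le_add_rpow _ _ hexp0 hexp1

lemma final_step {I R1 S M : ℝ≥0∞} {e ρ : ℝ} (he0 : 0 < e) (hρe : ρ * e = 1)
    (hkey : I ≤ M * (R1 + S ^ ρ)) : I ^ e ≤ M ^ e * 2 ^ e * (R1 ^ e + S) := by
  calc I ^ e ≤ (M * (R1 + S ^ ρ)) ^ e := ENNReal.rpow_le_rpow hkey he0.le
    _ = M ^ e * (R1 + S ^ ρ) ^ e := ENNReal.mul_rpow_of_nonneg _ _ he0.le
    _ ≤ M ^ e * (2 ^ e * (R1 ^ e + (S ^ ρ) ^ e)) :=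
        mul_le_mul_right (two_rpow_helper _ _ he0.le) _
    _ = M ^ e * 2 ^ e * (R1 ^ e + S) := by
        rw [← ENNReal.rpow_mul, hρe, ENNReal.rpow_one, mul_assoc]

/-- For `1 ≤ p`, `0 < q < p`, weights `v, w` and `0 ≤ a < b ≤ ∞` (with `b` an extended real):
`(∫_a^b (∫_x^∞ w)^{q/(p−q)} w(x)[σ_p(0,x)]^{pq/(p−q)} dx)^{(p−q)/(pq)}` is bounded by a
constant (depending only on `p, q`) times
`(∫_a^b (∫_x^b w)^{q/(p−q)} w(x) [σ_p(a,x)]^{pq/(p−q)} dx)^{(p−q)/(pq)}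
  + sup_{t ∈ [a,∞)} (∫_t^∞ w)^{1/q} σ_p(0,t)`. -/
theorem stmt17 (p q : ℝ) (hp : 1 ≤ p) (hq : 0 < q) (hqp : q < p) :
    ∃ C : ℝ≥0∞, C < ∞ ∧
      ∀ v w : ℝ → ℝ≥0∞, IsWeight v → IsWeight w →
        ∀ a : ℝ, 0 ≤ a → ∀ b : EReal, (a : EReal) < b →
          (∫⁻ x in {t : ℝ | a < t ∧ (t : EReal) < b},
              (∫⁻ s in Ioi x, w s) ^ (q / (p - q)) * w x *
                sig p v 0 x ^ (p * q / (p - q))) ^ ((p - q) / (p * q)) ≤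
            C * ((∫⁻ x in {t : ℝ | a < t ∧ (t : EReal) < b},
                    (∫⁻ s in {t : ℝ | x < t ∧ (t : EReal) < b}, w s) ^ (q / (p - q)) * w x *
                      sig p v a x ^ (p * q / (p - q))) ^ ((p - q) / (p * q)) +
                 ⨆ t ∈ Ici a, (∫⁻ s in Ioi t, w s) ^ (1 / q) * sig p v 0 t) := by
  have hpq : 0 < p - q := by linarith
  have hp0 : 0 < p := by linarith
  set s' := q / (p - q) with hs'def
  set ρ := p * q / (p - q) with hρdef
  set e := (p - q) / (p * q) with hedef
  have hs'0 : 0 < s' := div_pos hq hpq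
  have hρ0 : 0 < ρ := div_pos (mul_pos hp0 hq) hpq
  have he0 : 0 < e := div_pos hpq (mul_pos hp0 hq)
  have hρq : ρ / q = p / (p - q) := by rw [hρdef]; field_simp
  have hρq1 : 1 < ρ / q := by rw [hρq, lt_div_iff₀ hpq]; linarith
  have hρe : ρ * e = 1 := by rw [hρdef, hedef]; field_simp
  have hs'1 : s' + (1 - ρ / q) = 0 := by rw [hρq, hs'def]; field_simp; ring
  have hs'q : (1 / q) * ρ = s' + 1 := by rw [hρdef, hs'def]; field_simp; ring
  have h2 : (2:ℝ≥0∞) ≠ 0 := two_ne_zero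
  have h2t : (2:ℝ≥0∞) ≠ ∞ := ENNReal.ofNat_ne_top
  set Cgeo : ℝ≥0∞ := 2 * (1 - (2:ℝ≥0∞) ^ (1 - ρ / q))⁻¹ with hCgeodef
  have hr0lt : (2:ℝ≥0∞) ^ (1 - ρ / q) < 1 :=
    ENNReal.rpow_lt_one_of_one_lt_of_neg (by norm_num) (by linarith)
  have hCgeo_fin : Cgeo ≠ ∞ :=
    ENNReal.mul_ne_top h2t (ENNReal.inv_ne_top.mpr (tsub_pos_of_lt hr0lt).ne')
  obtain ⟨M, hMeq⟩ : ∃ M : ℝ≥0∞, M = 2 ^ ρ * (1 + 2 ^ s' * (1 + Cgeo)) := ⟨_, rfl⟩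
  have h2ρt : (2:ℝ≥0∞) ^ ρ ≠ ∞ := (ENNReal.rpow_lt_top_of_nonneg hρ0.le h2t).ne
  have h2s't : (2:ℝ≥0∞) ^ s' ≠ ∞ := (ENNReal.rpow_lt_top_of_nonneg hs'0.le h2t).ne
  have hMfin : M ≠ ∞ := hMeq ▸ ENNReal.mul_ne_top h2ρt
    (ENNReal.add_ne_top.mpr ⟨ENNReal.one_ne_top,
      ENNReal.mul_ne_top h2s't (ENNReal.add_ne_top.mpr ⟨ENNReal.one_ne_top, hCgeo_fin⟩)⟩)
  have hM0 : M ≠ 0 := by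
    rw [hMeq]
    refine mul_ne_zero ?_ ?_
    · simp [ENNReal.rpow_eq_zero_iff, h2, h2t]
    · exact fun h => by simp [add_eq_zero] at h
  have h2ρleM : (2:ℝ≥0∞) ^ ρ ≤ M := by
    rw [hMeq]
    nth_rewrite 1 [← mul_one ((2:ℝ≥0∞) ^ ρ)]
    exact mul_le_mul_right le_self_add _
  refine ⟨M ^ e * 2 ^ e, ?_, ?_⟩
  · exact ENNReal.mul_lt_top (ENNReal.rpow_lt_top_of_nonneg he0.le hMfin)
      (ENNReal.rpow_lt_top_of_nonneg he0.le h2t)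
  intro v w hv hw a ha b hab
  have hwm : Measurable w := hw.1
  set F : ℝ → ℝ≥0∞ := fun x => ∫⁻ t in Ioi x, w t with hFdef
  have hFanti : Antitone F := fun x y hxy => lintegral_mono_set (Ioi_subset_Ioi hxy)
  have hFmeas : Measurable F := hFanti.measurable
  have hσ0meas : Measurable fun x => sig p v 0 x := sig_meas p hp v 0
  have hσameas : Measurable fun x => sig p v a x := sig_meas p hp v a
  set S := ⨆ t ∈ Ici a, (∫⁻ s in Ioi t, w s) ^ (1 / q) * sig p v 0 t with hSdef
  have hSt : ∀ t : ℝ, a ≤ t → F t ^ (1 / q) * sig p v 0 t ≤ S := by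
    intro t ht
    exact le_iSup₂ (f := fun (t : ℝ) (_ : t ∈ Ici a) =>
      (∫⁻ s in Ioi t, w s) ^ (1 / q) * sig p v 0 t) t ht
  by_cases hSfin : S = ∞
  · have hC0 : M ^ e * 2 ^ e ≠ 0 := by
      apply mul_ne_zero
      · simp [ENNReal.rpow_eq_zero_iff, hM0, hMfin]
      · simp [ENNReal.rpow_eq_zero_iff, h2, h2t]
    rw [hSfin, add_top, ENNReal.mul_top hC0]
    exact le_top
  -- pointwise bound from the sup
  have hP : ∀ x : ℝ, a ≤ x → F x ≠ 0 →
      sig p v 0 x ^ ρ ≤ S ^ ρ * F x ^ (-(ρ / q)) := by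
    intro x hx hF0
    by_cases hFx : F x = ∞
    · have hσ : sig p v 0 x = 0 := by
        by_contra hσ0
        have htop : F x ^ (1 / q) * sig p v 0 x = ⊤ := by
          rw [hFx, ENNReal.top_rpow_of_pos (by positivity)]
          exact ENNReal.top_mul hσ0
        exact hSfin (top_le_iff.mp (htop ▸ hSt x hx))
      rw [hσ, ENNReal.zero_rpow_of_pos hρ0]
      exact zero_le
    · have hFF : F x ^ (1 / q) * F x ^ (-(1 / q)) = 1 := by
        rw [← ENNReal.rpow_add _ _ hF0 hFx]
        simp
      have h1 : sig p v 0 x ≤ S * F x ^ (-(1 / q)) := by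
        calc sig p v 0 x = (F x ^ (1 / q) * sig p v 0 x) * F x ^ (-(1 / q)) := by
              rw [mul_comm (F x ^ (1 / q)) (sig p v 0 x), mul_assoc, hFF, mul_one]
          _ ≤ S * F x ^ (-(1 / q)) := mul_le_mul_left (hSt x hx) _
      calc sig p v 0 x ^ ρ ≤ (S * F x ^ (-(1 / q))) ^ ρ := ENNReal.rpow_le_rpow h1 hρ0.le
        _ = S ^ ρ * F x ^ (-(ρ / q)) := by
            rw [ENNReal.mul_rpow_of_nonneg _ _ hρ0.le, ← ENNReal.rpow_mul]
            congr 1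
            ring
  -- the `A`-term bound, for any subinterval of `Ioi a`
  have hA : ∀ T : Set ℝ, T ⊆ Ioi a →
      (∫⁻ x in T, F x ^ s' * w x * sig p v 0 a ^ ρ) ≤ S ^ ρ := by
    intro T hT
    have hb1 : ∀ x ∈ T, F x ^ s' * w x * sig p v 0 a ^ ρ ≤
        (F a ^ s' * sig p v 0 a ^ ρ) * w x := by
      intro x hx
      have hFx : F x ≤ F a := hFanti (le_of_lt (hT hx))
      calc F x ^ s' * w x * sig p v 0 a ^ ρ
          ≤ F a ^ s' * w x * sig p v 0 a ^ ρ :=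
            mul_le_mul_left (mul_le_mul_left (ENNReal.rpow_le_rpow hFx hs'0.le) _) _
        _ = (F a ^ s' * sig p v 0 a ^ ρ) * w x := by ring
    calc (∫⁻ x in T, F x ^ s' * w x * sig p v 0 a ^ ρ)
        ≤ ∫⁻ x in T, (F a ^ s' * sig p v 0 a ^ ρ) * w x :=
          setLIntegral_mono (measurable_const.mul hwm) hb1
      _ = (F a ^ s' * sig p v 0 a ^ ρ) * ∫⁻ x in T, w x := lintegral_const_mul _ hwm
      _ ≤ (F a ^ s' * sig p v 0 a ^ ρ) * F a :=
          mul_le_mul_right (lintegral_mono_set hT) _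
      _ = (F a ^ (1 / q) * sig p v 0 a) ^ ρ := by
          rw [ENNReal.mul_rpow_of_nonneg _ _ hρ0.le, ← ENNReal.rpow_mul, hs'q,
            ENNReal.rpow_add_of_nonneg _ _ hs'0.le zero_le_one, ENNReal.rpow_one]
          ring
      _ ≤ S ^ ρ := ENNReal.rpow_le_rpow (hSt a le_rfl) hρ0.le
  -- the splitting of the main integral, for any subinterval of `Ioi a`
  have hIle : ∀ T : Set ℝ, T ⊆ Ioi a →
      (∫⁻ x in T, F x ^ s' * w x * sig p v 0 x ^ ρ) ≤
        2 ^ ρ * ((∫⁻ x in T, F x ^ s' * w x * sig p v 0 a ^ ρ) +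
          ∫⁻ x in T, F x ^ s' * w x * sig p v a x ^ ρ) := by
    intro T hT
    have hsub : ∀ x ∈ T, F x ^ s' * w x * sig p v 0 x ^ ρ ≤
        2 ^ ρ * (F x ^ s' * w x * sig p v 0 a ^ ρ + F x ^ s' * w x * sig p v a x ^ ρ) := by
      intro x hx
      have h1 : sig p v 0 x ^ ρ ≤ 2 ^ ρ * (sig p v 0 a ^ ρ + sig p v a x ^ ρ) :=
        le_trans (ENNReal.rpow_le_rpow (sig_subadd p hp v ha (le_of_lt (hT hx))) hρ0.le)
          (two_rpow_helper _ _ hρ0.le)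
      calc F x ^ s' * w x * sig p v 0 x ^ ρ
          ≤ F x ^ s' * w x * (2 ^ ρ * (sig p v 0 a ^ ρ + sig p v a x ^ ρ)) :=
            mul_le_mul_right h1 _
        _ = 2 ^ ρ * (F x ^ s' * w x * sig p v 0 a ^ ρ + F x ^ s' * w x * sig p v a x ^ ρ) := by
            ring
    have hmeas1 : Measurable fun x => F x ^ s' * w x * sig p v 0 a ^ ρ :=
      (((ENNReal.continuous_rpow_const.measurable.comp hFmeas).mul hwm).mul measurable_const)
    have hmeas2 : Measurable fun x => F x ^ s' * w x * sig p v a x ^ ρ :=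
      (((ENNReal.continuous_rpow_const.measurable.comp hFmeas).mul hwm).mul
        (ENNReal.continuous_rpow_const.measurable.comp hσameas))
    calc (∫⁻ x in T, F x ^ s' * w x * sig p v 0 x ^ ρ)
        ≤ ∫⁻ x in T, 2 ^ ρ * (F x ^ s' * w x * sig p v 0 a ^ ρ +
            F x ^ s' * w x * sig p v a x ^ ρ) :=
          setLIntegral_mono (measurable_const.mul (hmeas1.add hmeas2)) hsub
      _ = 2 ^ ρ * ∫⁻ x in T, (F x ^ s' * w x * sig p v 0 a ^ ρ +
            F x ^ s' * w x * sig p v a x ^ ρ) := lintegral_const_mul' _ _ h2ρt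
      _ = 2 ^ ρ * ((∫⁻ x in T, F x ^ s' * w x * sig p v 0 a ^ ρ) +
            ∫⁻ x in T, F x ^ s' * w x * sig p v a x ^ ρ) := by
          rw [lintegral_add_left hmeas1]
  -- case analysis on `b`
  by_cases hbtop : b = ⊤
  · subst hbtop
    have hset1 : {t : ℝ | a < t ∧ (t : EReal) < ⊤} = Ioi a := by
      ext t; simp [EReal.coe_lt_top]
    have hset2 : ∀ x : ℝ, {t : ℝ | x < t ∧ (t : EReal) < ⊤} = Ioi x := by
      intro x; ext t; simp [EReal.coe_lt_top]
    simp only [hset1, hset2]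
    refine final_step he0 hρe ?_
    calc (∫⁻ x in Ioi a, F x ^ s' * w x * sig p v 0 x ^ ρ)
        ≤ 2 ^ ρ * ((∫⁻ x in Ioi a, F x ^ s' * w x * sig p v 0 a ^ ρ) +
            ∫⁻ x in Ioi a, F x ^ s' * w x * sig p v a x ^ ρ) := hIle _ subset_rfl
      _ ≤ 2 ^ ρ * (S ^ ρ + ∫⁻ x in Ioi a, F x ^ s' * w x * sig p v a x ^ ρ) := by
          gcongr
          exact hA _ subset_rfl
      _ ≤ M * ((∫⁻ x in Ioi a, F x ^ s' * w x * sig p v a x ^ ρ) + S ^ ρ) := by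
          rw [add_comm (S ^ ρ)]
          exact mul_le_mul_left h2ρleM _
  · have hbbot : b ≠ ⊥ := ne_bot_of_gt hab
    lift b to ℝ using ⟨hbtop, hbbot⟩ with β
    have haβ : a < β := by exact_mod_cast hab
    have hset1 : {t : ℝ | a < t ∧ (t : EReal) < (β : EReal)} = Ioo a β := by
      ext t; simp [EReal.coe_lt_coe_iff]
    have hset2 : ∀ x : ℝ, {t : ℝ | x < t ∧ (t : EReal) < (β : EReal)} = Ioo x β := by
      intro x; ext t; simp [EReal.coe_lt_coe_iff]
    simp only [hset1, hset2]
    refine final_step he0 hρe ?_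
    set Fβ := F β with hFβdef
    have hFβt : Fβ ≠ ∞ := by
      intro htop
      refine hSfin (top_le_iff.mp ?_)
      have h1 := hSt β haβ.le
      rw [hFβdef] at htop
      rw [htop] at h1
      rwa [ENNReal.top_rpow_of_pos (by positivity),
        ENNReal.top_mul (sig_ne_zero p hp v hv (lt_of_le_of_lt ha haβ))] at h1
    set R1 := ∫⁻ x in Ioo a β, (∫⁻ s in Ioo x β, w s) ^ s' * w x * sig p v a x ^ ρ with hR1def
    have hB2 : (∫⁻ x in Ioo a β, F x ^ s' * w x * sig p v a x ^ ρ) ≤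
        2 ^ s' * (R1 + Cgeo * S ^ ρ) := by
      -- split the tail integral
      have hFsplit : ∀ x : ℝ, F x ≤ (∫⁻ s in Ioo x β, w s) + Fβ := by
        intro x
        calc F x ≤ ∫⁻ s in Ioo x β ∪ Ici β, w s := by
              refine lintegral_mono_set ?_
              intro t ht
              by_cases h : t < β
              · exact Or.inl ⟨ht, h⟩
              · exact Or.inr (not_lt.mp h)
          _ ≤ (∫⁻ s in Ioo x β, w s) + ∫⁻ s in Ici β, w s := lintegral_union_le _ _ _
          _ = (∫⁻ s in Ioo x β, w s) + Fβ := by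
              congr 1
              show (∫⁻ s in Ici β, w s) = ∫⁻ s in Ioi β, w s
              exact (setLIntegral_congr Ioi_ae_eq_Ici).symm
      have hptwise : ∀ x ∈ Ioo a β, F x ^ s' * w x * sig p v a x ^ ρ ≤
          2 ^ s' * ((∫⁻ s in Ioo x β, w s) ^ s' * w x * sig p v a x ^ ρ +
            Fβ ^ s' * (w x * sig p v a x ^ ρ)) := by
        intro x _
        have h1 : F x ^ s' ≤ 2 ^ s' * ((∫⁻ s in Ioo x β, w s) ^ s' + Fβ ^ s') :=
          le_trans (ENNReal.rpow_le_rpow (hFsplit x) hs'0.le) (two_rpow_helper _ _ hs'0.le)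
        calc F x ^ s' * w x * sig p v a x ^ ρ
            ≤ (2 ^ s' * ((∫⁻ s in Ioo x β, w s) ^ s' + Fβ ^ s')) * w x * sig p v a x ^ ρ :=
              mul_le_mul_left (mul_le_mul_left h1 _) _
          _ = 2 ^ s' * ((∫⁻ s in Ioo x β, w s) ^ s' * w x * sig p v a x ^ ρ +
              Fβ ^ s' * (w x * sig p v a x ^ ρ)) := by ring
      have hFbanti : Antitone (fun x : ℝ => ∫⁻ s in Ioo x β, w s) :=
        fun x y hxy => lintegral_mono_set (Ioo_subset_Ioo_left hxy)
      have hmeasb1 : Measurable fun x => (∫⁻ s in Ioo x β, w s) ^ s' * w x * sig p v a x ^ ρ :=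
        ((ENNReal.continuous_rpow_const.measurable.comp hFbanti.measurable).mul hwm).mul
          (ENNReal.continuous_rpow_const.measurable.comp hσameas)
      have hmeasb2 : Measurable fun x => Fβ ^ s' * (w x * sig p v a x ^ ρ) :=
        measurable_const.mul (hwm.mul (ENNReal.continuous_rpow_const.measurable.comp hσameas))
      have hFβs't : Fβ ^ s' ≠ ∞ := (ENNReal.rpow_lt_top_of_nonneg hs'0.le hFβt).ne
      have hB2' : Fβ ^ s' * (∫⁻ x in Ioo a β, w x * sig p v a x ^ ρ) ≤ Cgeo * S ^ ρ := by
        by_cases hFβ0 : Fβ = 0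
        · rw [hFβ0, ENNReal.zero_rpow_of_pos hs'0, zero_mul]
          exact zero_le
        · have hJ : (∫⁻ x in Ioo a β, w x * sig p v a x ^ ρ) ≤
              S ^ ρ * ∫⁻ x in Ioo a β, F x ^ (-(ρ / q)) * w x := by
            have hpt : ∀ x ∈ Ioo a β, w x * sig p v a x ^ ρ ≤
                S ^ ρ * (F x ^ (-(ρ / q)) * w x) := by
              intro x hx
              have hFx0 : F x ≠ 0 := by
                intro h0
                exact hFβ0 (le_antisymm (h0 ▸ hFanti hx.2.le) (zero_le))
              have hσle : sig p v a x ^ ρ ≤ S ^ ρ * F x ^ (-(ρ / q)) :=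
                le_trans (ENNReal.rpow_le_rpow (sig_mono_s17 p hp v ha le_rfl) hρ0.le)
                  (hP x hx.1.le hFx0)
              calc w x * sig p v a x ^ ρ ≤ w x * (S ^ ρ * F x ^ (-(ρ / q))) :=
                    mul_le_mul_right hσle _
                _ = S ^ ρ * (F x ^ (-(ρ / q)) * w x) := by ring
            calc (∫⁻ x in Ioo a β, w x * sig p v a x ^ ρ)
                ≤ ∫⁻ x in Ioo a β, S ^ ρ * (F x ^ (-(ρ / q)) * w x) :=
                  setLIntegral_mono (measurable_const.mul
                    ((ENNReal.continuous_rpow_const.measurable.comp hFmeas).mul hwm)) hpt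
              _ = S ^ ρ * ∫⁻ x in Ioo a β, F x ^ (-(ρ / q)) * w x :=
                  lintegral_const_mul' _ _ (ENNReal.rpow_lt_top_of_nonneg hρ0.le hSfin).ne
          have hK : (∫⁻ x in Ioo a β, F x ^ (-(ρ / q)) * w x) ≤
              Cgeo * Fβ ^ (1 - ρ / q) := lemD w hwm a β hρq1 hFβ0 hFβt
          calc Fβ ^ s' * (∫⁻ x in Ioo a β, w x * sig p v a x ^ ρ)
              ≤ Fβ ^ s' * (S ^ ρ * (Cgeo * Fβ ^ (1 - ρ / q))) := by
                exact mul_le_mul_right (le_trans hJ (mul_le_mul_right hK _)) _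
            _ = Cgeo * S ^ ρ * (Fβ ^ s' * Fβ ^ (1 - ρ / q)) := by ring
            _ = Cgeo * S ^ ρ := by
                rw [← ENNReal.rpow_add _ _ hFβ0 hFβt, hs'1, ENNReal.rpow_zero, mul_one]
      calc (∫⁻ x in Ioo a β, F x ^ s' * w x * sig p v a x ^ ρ)
          ≤ ∫⁻ x in Ioo a β, 2 ^ s' * ((∫⁻ s in Ioo x β, w s) ^ s' * w x * sig p v a x ^ ρ +
              Fβ ^ s' * (w x * sig p v a x ^ ρ)) :=
            setLIntegral_mono (measurable_const.mul (hmeasb1.add hmeasb2)) hptwise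
        _ = 2 ^ s' * ∫⁻ x in Ioo a β, ((∫⁻ s in Ioo x β, w s) ^ s' * w x * sig p v a x ^ ρ +
              Fβ ^ s' * (w x * sig p v a x ^ ρ)) := lintegral_const_mul' _ _ h2s't
        _ = 2 ^ s' * (R1 + ∫⁻ x in Ioo a β, Fβ ^ s' * (w x * sig p v a x ^ ρ)) := by
            rw [lintegral_add_left hmeasb1]
        _ = 2 ^ s' * (R1 + Fβ ^ s' * ∫⁻ x in Ioo a β, w x * sig p v a x ^ ρ) := by
            rw [lintegral_const_mul' _ _ hFβs't]
        _ ≤ 2 ^ s' * (R1 + Cgeo * S ^ ρ) := by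
            gcongr
    calc (∫⁻ x in Ioo a β, F x ^ s' * w x * sig p v 0 x ^ ρ)
        ≤ 2 ^ ρ * ((∫⁻ x in Ioo a β, F x ^ s' * w x * sig p v 0 a ^ ρ) +
            ∫⁻ x in Ioo a β, F x ^ s' * w x * sig p v a x ^ ρ) :=
          hIle _ (fun t ht => ht.1)
      _ ≤ 2 ^ ρ * (S ^ ρ + 2 ^ s' * (R1 + Cgeo * S ^ ρ)) := by
          gcongr
          exact hA _ (fun t ht => ht.1)
      _ ≤ 2 ^ ρ * ((R1 + S ^ ρ) + 2 ^ s' * ((R1 + S ^ ρ) + Cgeo * (R1 + S ^ ρ))) := by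
          gcongr
          · exact le_add_self
          · exact le_self_add
          · exact le_add_self
      _ = M * (R1 + S ^ ρ) := by rw [hMeq]; ring
end
end
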